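/- arXiv:1801.06112 — 5 statements merged into one kernel-verified Lean document; each statement's English description precedes it below -/
import Mathlib

section
/- Let σ be a term ordering, F a finite set of nonzero polynomials in Q[x_1,...,x_n], and G_σ the reduced σ-Gröbner basis of the ideal ⟨F⟩. A prime p is σ-Pauer-lucky for prim(G_σ) if and only if p does not divide den(G_σ) (i.e. p is σ-good for ⟨F⟩). -/
open MvPolynomial
open scoped Classical

namespace GB

variable {n : ℕ}

/-- The σ-leading exponent (leading term, as a power-product) of a polynomial;
`0` for the zero polynomial. -/
noncomputable def lexp {K : Type*} [CommSemiring K] (m : MonomialOrder (Fin n))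
    (f : MvPolynomial (Fin n) K) : Fin n →₀ ℕ :=
  m.toSyn.symm (f.support.sup fun d => m.toSyn d)

/-- The σ-leading coefficient. -/
noncomputable def lcoeff {K : Type*} [CommSemiring K] (m : MonomialOrder (Fin n))
    (f : MvPolynomial (Fin n) K) : K :=
  MvPolynomial.coeff (lexp m f) f

/-- The σ-leading monomial (leading coefficient times leading power-product). -/
noncomputable def LM {K : Type*} [CommSemiring K] (m : MonomialOrder (Fin n))
    (f : MvPolynomial (Fin n) K) : MvPolynomial (Fin n) K :=
  monomial (lexp m f) (lcoeff m f)

/-- The leading term ideal `LT_σ(I)` of an ideal, over a field. -/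
noncomputable def LTIdeal {K : Type*} [Field K] (m : MonomialOrder (Fin n))
    (I : Ideal (MvPolynomial (Fin n) K)) : Ideal (MvPolynomial (Fin n) K) :=
  Ideal.span {t | ∃ f ∈ I, f ≠ 0 ∧ t = monomial (lexp m f) (1 : K)}

/-- `G` is a σ-Gröbner basis of `I` (over a field). -/
def IsGB {K : Type*} [Field K] (m : MonomialOrder (Fin n))
    (G : Finset (MvPolynomial (Fin n) K)) (I : Ideal (MvPolynomial (Fin n) K)) : Prop :=
  (0 : MvPolynomial (Fin n) K) ∉ G ∧ (G : Set (MvPolynomial (Fin n) K)) ⊆ I ∧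
    Ideal.span (G : Set (MvPolynomial (Fin n) K)) = I ∧
    ∀ f ∈ I, f ≠ 0 → ∃ g ∈ G, lexp m g ≤ lexp m f

/-- `G` is the reduced σ-Gröbner basis of `I`. -/
def IsReducedGB {K : Type*} [Field K] (m : MonomialOrder (Fin n))
    (G : Finset (MvPolynomial (Fin n) K)) (I : Ideal (MvPolynomial (Fin n) K)) : Prop :=
  IsGB m G I ∧ (∀ g ∈ G, lcoeff m g = 1) ∧
    ∀ g ∈ G, ∀ d ∈ g.support, ∀ g' ∈ G, g' ≠ g → ¬ lexp m g' ≤ d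

/-- `G` is a strong σ-Gröbner basis of the ideal `J ⊆ ℤ[x]` it generates. -/
def IsStrongGB (m : MonomialOrder (Fin n)) (G : Finset (MvPolynomial (Fin n) ℤ))
    (J : Ideal (MvPolynomial (Fin n) ℤ)) : Prop :=
  (0 : MvPolynomial (Fin n) ℤ) ∉ G ∧ Ideal.span (G : Set (MvPolynomial (Fin n) ℤ)) = J ∧
    ∀ f ∈ J, f ≠ 0 → ∃ g ∈ G, LM m g ∣ LM m f

/-- `G` is a minimal strong σ-Gröbner basis of `J`. -/
def IsMinStrongGB (m : MonomialOrder (Fin n)) (G : Finset (MvPolynomial (Fin n) ℤ))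
    (J : Ideal (MvPolynomial (Fin n) ℤ)) : Prop :=
  IsStrongGB m G J ∧ ∀ g ∈ G, ∀ g' ∈ G, g ≠ g' → ¬ LM m g ∣ LM m g'

/-- The denominator of a polynomial with rational coefficients. -/
def den (f : MvPolynomial (Fin n) ℚ) : ℕ :=
  f.support.lcm fun d => (MvPolynomial.coeff d f).den

/-- The denominator of a finite set of polynomials. -/
noncomputable def denF (G : Finset (MvPolynomial (Fin n) ℚ)) : ℕ :=
  G.lcm den

/-- `f` scaled by `den f`, as an integer polynomial. -/
noncomputable def intScale (f : MvPolynomial (Fin n) ℚ) : MvPolynomial (Fin n) ℤ :=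
  f.support.sum fun d => monomial d (MvPolynomial.coeff d f * (den f : ℚ)).num

/-- The primitive integral part of a polynomial with rational coefficients. -/
noncomputable def primQ (f : MvPolynomial (Fin n) ℚ) : MvPolynomial (Fin n) ℤ :=
  (intScale f).support.sum fun d =>
    monomial d (MvPolynomial.coeff d (intScale f) /
      ((intScale f).support.gcd fun e => MvPolynomial.coeff e (intScale f)))

/-- Reduction of a rational number modulo `p` (meaningful when `p ∤ a.den`). -/
noncomputable def redQ (p : ℕ) (a : ℚ) : ZMod p :=
  (a.num : ZMod p) * (a.den : ZMod p)⁻¹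

/-- Coefficientwise reduction modulo `p` of a polynomial with rational coefficients
(meaningful when `p` divides no coefficient denominator). -/
noncomputable def piP (p : ℕ) (f : MvPolynomial (Fin n) ℚ) :
    MvPolynomial (Fin n) (ZMod p) :=
  f.support.sum fun d => monomial d (redQ p (MvPolynomial.coeff d f))

/-- A σ-ordered tuple of (necessarily distinct) power-products. -/
def SOrd (m : MonomialOrder (Fin n)) (L : List (Fin n →₀ ℕ)) : Prop :=
  L.Pairwise fun a b => m.toSyn a < m.toSyn b

/-- `T'` strictly σ-precedes `T`:  either `T` is a proper prefix of `T'`, or at the first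
index where they differ (within both lengths) the entry of `T'` is σ-smaller. -/
def Prec (m : MonomialOrder (Fin n)) (T' T : List (Fin n →₀ ℕ)) : Prop :=
  (T <+: T' ∧ T ≠ T') ∨
    ∃ k, k < T.length ∧ k < T'.length ∧ T.take k = T'.take k ∧
      m.toSyn (T'.getD k 0) < m.toSyn (T.getD k 0)

/-- `T'` σ-precedes or equals `T`. -/
def PrecEq (m : MonomialOrder (Fin n)) (T' T : List (Fin n →₀ ℕ)) : Prop :=
  Prec m T' T ∨ T' = T

/-- The minimal generating set of the monomial ideal `LT_σ(I)`: the set of leading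
power-products of nonzero elements of `I` which are minimal w.r.t. divisibility. -/
def minGenSet {K : Type*} [Field K] (m : MonomialOrder (Fin n))
    (I : Ideal (MvPolynomial (Fin n) K)) : Set (Fin n →₀ ℕ) :=
  {d | (∃ f ∈ I, f ≠ 0 ∧ lexp m f = d) ∧
    ∀ f ∈ I, f ≠ 0 → lexp m f ≤ d → lexp m f = d}

/-- `L` is the tuple `O_σ(I)`: the σ-ordered tuple of the minimal generating set
of `LT_σ(I)`. -/
def IsOsIdeal {K : Type*} [Field K] (m : MonomialOrder (Fin n))
    (I : Ideal (MvPolynomial (Fin n) K)) (L : List (Fin n →₀ ℕ)) : Prop :=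
  SOrd m L ∧ ∀ d, d ∈ L ↔ d ∈ minGenSet m I

/-- `L` is the σ-ordered tuple of the interreduction of the set `S` of power-products. -/
def IsOsSet (m : MonomialOrder (Fin n)) (S : Finset (Fin n →₀ ℕ))
    (L : List (Fin n →₀ ℕ)) : Prop :=
  SOrd m L ∧ ∀ d, d ∈ L ↔ (d ∈ S ∧ ∀ s ∈ S, s ≤ d → s = d)

end GB

namespace GBAux

open GB

variable {n : ℕ} {K : Type*} [CommSemiring K] (m : MonomialOrder (Fin n))

theorem toSyn_lexp {f : MvPolynomial (Fin n) K} :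
    m.toSyn (lexp m f) = f.support.sup fun d => m.toSyn d := by
  simp [lexp]

theorem lexp_mem_support {f : MvPolynomial (Fin n) K} (hf : f ≠ 0) :
    lexp m f ∈ f.support := by
  obtain ⟨b, hb, he⟩ := Finset.exists_mem_eq_sup f.support
    (by simpa [Finset.nonempty_iff_ne_empty] using hf) fun d => m.toSyn d
  rw [lexp, he, AddEquiv.symm_apply_apply]
  exact hb

theorem le_toSyn_lexp {f : MvPolynomial (Fin n) K} {d : Fin n →₀ ℕ} (hd : d ∈ f.support) :
    m.toSyn d ≤ m.toSyn (lexp m f) := by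
  rw [toSyn_lexp]; exact Finset.le_sup hd

theorem lcoeff_ne_zero {f : MvPolynomial (Fin n) K} (hf : f ≠ 0) :
    lcoeff m f ≠ 0 := by
  have := lexp_mem_support m hf
  rwa [MvPolynomial.mem_support_iff] at this

theorem lexp_unique {f : MvPolynomial (Fin n) K} {β : Fin n →₀ ℕ}
    (hc : MvPolynomial.coeff β f ≠ 0)
    (hb : ∀ d ∈ f.support, m.toSyn d ≤ m.toSyn β) :
    lexp m f = β := by
  have h1 : m.toSyn (lexp m f) = m.toSyn β := by
    refine le_antisymm ?_ ?_
    · rw [toSyn_lexp]; exact Finset.sup_le hb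
    · exact le_toSyn_lexp m (by simpa [MvPolynomial.mem_support_iff] using hc)
  exact m.toSyn.injective h1

theorem lexp_lt {f : MvPolynomial (Fin n) K} {β : Fin n →₀ ℕ} (hf : f ≠ 0)
    (hc : MvPolynomial.coeff β f = 0)
    (hb : ∀ d ∈ f.support, m.toSyn d ≤ m.toSyn β) :
    m.toSyn (lexp m f) < m.toSyn β := by
  refine lt_of_le_of_ne (by rw [toSyn_lexp]; exact Finset.sup_le hb) ?_
  intro h
  have := m.toSyn.injective h
  exact lcoeff_ne_zero m hf (by simp only [GB.lcoeff]; rwa [this])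

theorem lexp_congr {L : Type*} [CommSemiring L] {f : MvPolynomial (Fin n) K}
    {f' : MvPolynomial (Fin n) L} (h : f.support = f'.support) :
    lexp m f = lexp m f' := by
  simp [lexp, h]


section Phi

/-- The canonical map `ℤ[x] → ℚ[x]`. -/
noncomputable abbrev phi : MvPolynomial (Fin n) ℤ →+* MvPolynomial (Fin n) ℚ :=
  MvPolynomial.map (Int.castRingHom ℚ)

theorem coeff_phi (h : MvPolynomial (Fin n) ℤ) (d : Fin n →₀ ℕ) :
    MvPolynomial.coeff d (phi h) = ((MvPolynomial.coeff d h : ℤ) : ℚ) :=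
  MvPolynomial.coeff_map _ _ _

theorem support_phi (h : MvPolynomial (Fin n) ℤ) : (phi h).support = h.support :=
  MvPolynomial.support_map_of_injective _ Int.cast_injective

theorem phi_injective : Function.Injective (phi (n := n)) :=
  MvPolynomial.map_injective _ Int.cast_injective

theorem phi_ne_zero {h : MvPolynomial (Fin n) ℤ} (h0 : h ≠ 0) : phi h ≠ 0 := by
  intro hc; exact h0 (phi_injective (by simpa using hc))

theorem lexp_phi (h : MvPolynomial (Fin n) ℤ) : lexp m (phi h) = lexp m h :=
  lexp_congr m (support_phi h)

theorem lcoeff_phi (h : MvPolynomial (Fin n) ℤ) :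
    lcoeff m (phi h) = ((lcoeff m h : ℤ) : ℚ) := by
  simp only [GB.lcoeff, lexp_phi, coeff_phi]

end Phi

section Den

theorem den_ne_zero (f : MvPolynomial (Fin n) ℚ) : (den f : ℚ) ≠ 0 := by
  have : den f ≠ 0 := by
    intro h0
    rw [den, Finset.lcm_eq_zero_iff] at h0
    obtain ⟨d, _, hd⟩ := h0
    exact (Rat.den_nz _) hd
  exact_mod_cast this

theorem coeff_den_dvd_den (f : MvPolynomial (Fin n) ℚ) (d : Fin n →₀ ℕ) :
    (MvPolynomial.coeff d f).den ∣ den f := by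
  by_cases hd : d ∈ f.support
  · exact Finset.dvd_lcm hd
  · rw [MvPolynomial.notMem_support_iff] at hd
    simp [hd]

theorem num_cast_of_den_dvd {q : ℚ} {k : ℕ} (h : q.den ∣ k) :
    ((q * (k : ℚ)).num : ℚ) = q * k := by
  obtain ⟨c, hc⟩ := h
  have hd : (q.den : ℚ) ≠ 0 := by
    exact_mod_cast q.den_nz
  have h1 : q * (q.den : ℚ) = (q.num : ℚ) := by
    nth_rewrite 1 [← Rat.num_div_den q]
    rw [div_mul_cancel₀ _ hd]
  have he : q * (k : ℚ) = ((q.num * c : ℤ) : ℚ) := by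
    subst hc
    push_cast
    rw [← mul_assoc, h1]
  rw [he, Rat.num_intCast]

theorem coeff_intScale (f : MvPolynomial (Fin n) ℚ) (d : Fin n →₀ ℕ) :
    MvPolynomial.coeff d (intScale f) = (MvPolynomial.coeff d f * (den f : ℚ)).num := by
  rw [intScale, ← MvPolynomial.lcoeff_apply, map_sum]
  simp only [MvPolynomial.lcoeff_apply, MvPolynomial.coeff_monomial]
  rw [Finset.sum_ite_eq' f.support d]
  by_cases hd : d ∈ f.support
  · simp [hd]
  · rw [MvPolynomial.notMem_support_iff] at hd
    simp [hd]

theorem coeff_intScale_cast (f : MvPolynomial (Fin n) ℚ) (d : Fin n →₀ ℕ) :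
    ((MvPolynomial.coeff d (intScale f) : ℤ) : ℚ)
      = MvPolynomial.coeff d f * (den f : ℚ) := by
  rw [coeff_intScale]
  exact num_cast_of_den_dvd (coeff_den_dvd_den f d)

theorem support_intScale (f : MvPolynomial (Fin n) ℚ) :
    (intScale f).support = f.support := by
  ext d
  simp only [MvPolynomial.mem_support_iff]
  constructor
  · intro h hc
    exact h (by rw [coeff_intScale, hc]; simp)
  · intro h hc
    have : ((MvPolynomial.coeff d (intScale f) : ℤ) : ℚ) = 0 := by rw [hc]; simp
    rw [coeff_intScale_cast] at this
    rcases mul_eq_zero.mp this with h1 | h1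
    · exact h h1
    · exact den_ne_zero f h1

theorem lexp_intScale (f : MvPolynomial (Fin n) ℚ) : lexp m (intScale f) = lexp m f :=
  lexp_congr m (support_intScale f)

/-- The content of `intScale f`. -/
noncomputable def content (f : MvPolynomial (Fin n) ℚ) : ℤ :=
  (intScale f).support.gcd fun e => MvPolynomial.coeff e (intScale f)

theorem content_dvd_coeff (f : MvPolynomial (Fin n) ℚ) (d : Fin n →₀ ℕ) :
    content f ∣ MvPolynomial.coeff d (intScale f) := by
  by_cases hd : d ∈ (intScale f).support
  · exact Finset.gcd_dvd hd
  · rw [MvPolynomial.notMem_support_iff] at hd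
    rw [hd]; exact dvd_zero _

theorem content_ne_zero {f : MvPolynomial (Fin n) ℚ} (hf : f ≠ 0) : content f ≠ 0 := by
  intro h0
  rw [content, Finset.gcd_eq_zero_iff] at h0
  apply hf
  ext d
  by_cases hd : d ∈ (intScale f).support
  · have := h0 d hd
    rw [support_intScale, MvPolynomial.mem_support_iff] at hd
    have h2 : ((MvPolynomial.coeff d (intScale f) : ℤ) : ℚ) = 0 := by rw [this]; simp
    rw [coeff_intScale_cast] at h2
    rcases mul_eq_zero.mp h2 with h1 | h1
    · exact absurd h1 hd
    · exact absurd h1 (den_ne_zero f)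
  · rw [support_intScale, MvPolynomial.notMem_support_iff] at hd
    simpa using hd

theorem coeff_primQ (f : MvPolynomial (Fin n) ℚ) (d : Fin n →₀ ℕ) :
    MvPolynomial.coeff d (primQ f) = MvPolynomial.coeff d (intScale f) / content f := by
  rw [primQ, ← MvPolynomial.lcoeff_apply, map_sum]
  simp only [MvPolynomial.lcoeff_apply, MvPolynomial.coeff_monomial]
  rw [Finset.sum_ite_eq' (intScale f).support d]
  by_cases hd : d ∈ (intScale f).support
  · simp [hd, content]
  · rw [MvPolynomial.notMem_support_iff] at hd
    simp [hd]

theorem support_primQ {f : MvPolynomial (Fin n) ℚ} (hf : f ≠ 0) :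
    (primQ f).support = f.support := by
  rw [← support_intScale]
  ext d
  simp only [MvPolynomial.mem_support_iff, coeff_primQ]
  constructor
  · intro h hc
    rw [hc] at h
    simp at h
  · intro h hc
    apply h
    have := Int.ediv_mul_cancel (content_dvd_coeff f d)
    rw [hc] at this
    simpa using this.symm

theorem lexp_primQ {f : MvPolynomial (Fin n) ℚ} (hf : f ≠ 0) :
    lexp m (primQ f) = lexp m f :=
  lexp_congr m (support_primQ hf)

theorem primQ_ne_zero {f : MvPolynomial (Fin n) ℚ} (hf : f ≠ 0) : primQ f ≠ 0 := by
  intro h0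
  apply hf
  have := support_primQ hf
  rw [h0] at this
  simp only [MvPolynomial.support_zero] at this
  exact MvPolynomial.support_eq_empty.mp this.symm

theorem phi_primQ {f : MvPolynomial (Fin n) ℚ} (hf : f ≠ 0) :
    phi (primQ f) = MvPolynomial.C ((den f : ℚ) / ((content f : ℤ) : ℚ)) * f := by
  ext d
  rw [coeff_phi, MvPolynomial.coeff_C_mul, coeff_primQ,
    Int.cast_div_charZero (content_dvd_coeff f d), coeff_intScale_cast]
  field_simp

theorem lcoeff_primQ_mul_content {f : MvPolynomial (Fin n) ℚ} (hf : f ≠ 0)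
    (h1 : lcoeff m f = 1) :
    lcoeff m (primQ f) * content f = (den f : ℤ) := by
  have hl : MvPolynomial.coeff (lexp m f) (intScale f) = (den f : ℤ) := by
    have := coeff_intScale_cast f (lexp m f)
    rw [GB.lcoeff] at h1
    rw [h1, one_mul] at this
    exact_mod_cast this
  rw [GB.lcoeff, lexp_primQ m hf, coeff_primQ, hl]
  exact Int.ediv_mul_cancel (by rw [← hl]; exact content_dvd_coeff f _)

theorem lcoeff_primQ_dvd_den {f : MvPolynomial (Fin n) ℚ} (hf : f ≠ 0)
    (h1 : lcoeff m f = 1) :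
    lcoeff m (primQ f) ∣ (den f : ℤ) :=
  ⟨content f, (lcoeff_primQ_mul_content m hf h1).symm⟩

end Den

end GBAux

namespace GBAux

open GB

variable {n : ℕ} (m : MonomialOrder (Fin n))

section Lcm

theorem prime_dvd_finset_lcm {α : Type*} {s : Finset α} {f : α → ℕ} {p : ℕ}
    (hp : p.Prime) : p ∣ s.lcm f ↔ ∃ a ∈ s, p ∣ f a := by
  classical
  induction s using Finset.induction with
  | empty => simp [Nat.Prime.one_lt hp, Nat.dvd_one, Nat.Prime.ne_one hp]
  | insert b s hb ih =>
    rw [Finset.lcm_insert]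
    constructor
    · intro h
      have h2 : p ∣ f b * s.lcm f := h.trans (lcm_dvd (dvd_mul_right _ _) (dvd_mul_left _ _))
      rcases (Nat.Prime.dvd_mul hp).mp h2 with h3 | h3
      · exact ⟨b, Finset.mem_insert_self _ _, h3⟩
      · obtain ⟨a, ha, hpa⟩ := ih.mp h3
        exact ⟨a, Finset.mem_insert_of_mem ha, hpa⟩
    · rintro ⟨a, ha, hpa⟩
      rcases Finset.mem_insert.mp ha with rfl | ha
      · exact hpa.trans (dvd_lcm_left _ _)
      · exact (hpa.trans (Finset.dvd_lcm ha)).trans (dvd_lcm_right _ _)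

theorem prime_dvd_den_iff {p : ℕ} (hp : p.Prime) (f : MvPolynomial (Fin n) ℚ) :
    p ∣ den f ↔ ∃ d ∈ f.support, p ∣ (MvPolynomial.coeff d f).den :=
  prime_dvd_finset_lcm hp

theorem prime_dvd_denF_iff {p : ℕ} (hp : p.Prime) (G : Finset (MvPolynomial (Fin n) ℚ)) :
    p ∣ denF G ↔ ∃ g ∈ G, p ∣ den g :=
  prime_dvd_finset_lcm hp

end Lcm

section Cover

theorem LM_dvd_iff {a b : MvPolynomial (Fin n) ℤ} (hb : lcoeff m b ≠ 0)
    (h : LM m a ∣ LM m b) : lexp m a ≤ lexp m b ∧ lcoeff m a ∣ lcoeff m b := by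
  rw [LM, LM, MvPolynomial.monomial_dvd_monomial] at h
  refine ⟨?_, h.2⟩
  rcases h.1 with h1 | h1
  · exact absurd h1 hb
  · exact h1

theorem lexp_monomial_shift {a : MvPolynomial (Fin n) ℤ} (ha : a ≠ 0) (γ : Fin n →₀ ℕ) :
    lexp m (monomial γ 1 * a) = γ + lexp m a ∧
      lcoeff m (monomial γ 1 * a) = lcoeff m a ∧
      ∀ d ∈ (monomial γ 1 * a).support, m.toSyn d ≤ m.toSyn (γ + lexp m a) := by
  have hbound : ∀ d ∈ (monomial γ 1 * a).support, m.toSyn d ≤ m.toSyn (γ + lexp m a) := by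
    intro d hd
    rw [MvPolynomial.mem_support_iff, MvPolynomial.coeff_monomial_mul'] at hd
    by_cases hγ : γ ≤ d
    · have h1 : coeff (d - γ) a ≠ 0 := by
        intro h0; apply hd; rw [if_pos hγ, h0, mul_zero]
      have h2 : d = γ + (d - γ) := by
        rw [add_comm]; exact (tsub_add_cancel_of_le hγ).symm
      rw [h2, map_add, map_add]
      exact add_le_add le_rfl (le_toSyn_lexp m (f := a) (by rwa [MvPolynomial.mem_support_iff]))
    · exfalso; rw [if_neg hγ] at hd; exact hd rfl
  have hc : coeff (γ + lexp m a) (monomial γ (1:ℤ) * a) = lcoeff m a := by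
    rw [MvPolynomial.coeff_monomial_mul, one_mul]; rfl
  have hcne : coeff (γ + lexp m a) (monomial γ (1:ℤ) * a) ≠ 0 := by
    rw [hc]; exact lcoeff_ne_zero m ha
  have hle := lexp_unique m hcne hbound
  exact ⟨hle, by rw [GB.lcoeff, hle, hc], hbound⟩

end Cover

section Main

variable {m : MonomialOrder (Fin n)}
variable {G : Finset (MvPolynomial (Fin n) ℚ)} {I : Ideal (MvPolynomial (Fin n) ℚ)}
variable {Gt : Finset (MvPolynomial (Fin n) ℤ)} {p : ℕ}

/-- The ideal `J = ⟨prim(G)⟩ ⊆ ℤ[x]`. -/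
noncomputable def Jdl (G : Finset (MvPolynomial (Fin n) ℚ)) : Ideal (MvPolynomial (Fin n) ℤ) :=
  Ideal.span (GB.primQ '' (G : Set (MvPolynomial (Fin n) ℚ)))

theorem memG_ne_zero (hG : IsReducedGB m G I) {g : MvPolynomial (Fin n) ℚ} (hg : g ∈ G) :
    g ≠ 0 := fun h0 => hG.1.1 (h0 ▸ hg)

theorem memG_mem_I (hG : IsReducedGB m G I) {g : MvPolynomial (Fin n) ℚ} (hg : g ∈ G) :
    g ∈ I := hG.1.2.1 hg

theorem phi_J_mem_I (hG : IsReducedGB m G I) {h : MvPolynomial (Fin n) ℤ}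
    (hh : h ∈ Jdl G) : phi h ∈ I := by
  induction hh using Submodule.span_induction with
  | mem x hx =>
    obtain ⟨g, hgG, rfl⟩ := hx
    rw [phi_primQ (memG_ne_zero hG hgG)]
    exact Ideal.mul_mem_left _ _ (memG_mem_I hG hgG)
  | zero => simp
  | add x y _ _ hx hy => rw [map_add]; exact Ideal.add_mem _ hx hy
  | smul r x _ hx =>
    rw [smul_eq_mul, map_mul]
    exact Ideal.mul_mem_left _ _ hx

theorem memGt_mem_J (hGt : IsMinStrongGB m Gt (Jdl G)) {g' : MvPolynomial (Fin n) ℤ}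
    (hg' : g' ∈ Gt) : g' ∈ Jdl G := by
  rw [← hGt.1.2.1]
  exact Ideal.subset_span hg'

theorem memGt_ne_zero (hGt : IsMinStrongGB m Gt (Jdl G)) {g' : MvPolynomial (Fin n) ℤ}
    (hg' : g' ∈ Gt) : g' ≠ 0 := fun h0 => hGt.1.1 (h0 ▸ hg')

theorem strong_cover (hGt : IsMinStrongGB m Gt (Jdl G)) {h : MvPolynomial (Fin n) ℤ}
    (hh : h ∈ Jdl G) (h0 : h ≠ 0) :
    ∃ g' ∈ Gt, lexp m g' ≤ lexp m h ∧ lcoeff m g' ∣ lcoeff m h := by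
  obtain ⟨g', hg', hdvd⟩ := hGt.1.2.2 h hh h0
  obtain ⟨h1, h2⟩ := LM_dvd_iff m (lcoeff_ne_zero m h0) hdvd
  exact ⟨g', hg', h1, h2⟩

theorem primQ_mem_J {g : MvPolynomial (Fin n) ℚ} (hg : g ∈ G) : primQ g ∈ Jdl G :=
  Ideal.subset_span ⟨g, hg, rfl⟩

/-- Every element of the minimal strong basis has leading exponent a multiple of
some element of `G`. -/
theorem exists_G_le_lexp (hG : IsReducedGB m G I) (hGt : IsMinStrongGB m Gt (Jdl G))
    {g' : MvPolynomial (Fin n) ℤ} (hg' : g' ∈ Gt) :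
    ∃ g ∈ G, lexp m g ≤ lexp m g' := by
  have h1 : phi g' ∈ I := phi_J_mem_I hG (memGt_mem_J hGt hg')
  have h2 : phi g' ≠ 0 := phi_ne_zero (memGt_ne_zero hGt hg')
  obtain ⟨g, hgG, hle⟩ := hG.1.2.2.2 (phi g') h1 h2
  rw [lexp_phi] at hle
  exact ⟨g, hgG, hle⟩

theorem support_C_mul {R : Type*} [CommSemiring R] {u : R} {a : MvPolynomial (Fin n) R}
    {d : Fin n →₀ ℕ} (hd : d ∈ (MvPolynomial.C u * a).support) : d ∈ a.support := by
  rw [MvPolynomial.mem_support_iff, MvPolynomial.coeff_C_mul] at hd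
  rw [MvPolynomial.mem_support_iff]
  exact fun h0 => hd (by rw [h0, mul_zero])

/-- Direction 2: if `p` does not divide `den G` then `p` is Pauer-lucky. -/
theorem dir2 (hG : IsReducedGB m G I) (hGt : IsMinStrongGB m Gt (Jdl G))
    (hp : p.Prime) (hden : ¬ p ∣ denF G) :
    ∀ g' ∈ Gt, ¬ (p : ℤ) ∣ lcoeff m g' := by
  intro g' hg' hpdvd
  obtain ⟨g, hgG, hle⟩ := exists_G_le_lexp hG hGt hg'
  have hgne : g ≠ 0 := memG_ne_zero hG hgG
  have hmono : lcoeff m g = 1 := hG.2.1 g hgG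
  set cg := lcoeff m (primQ g) with hcg
  have hcg_dvd : cg ∣ (den g : ℤ) := lcoeff_primQ_dvd_den m hgne hmono
  have hpq0 : primQ g ≠ 0 := primQ_ne_zero hgne
  -- the shifted polynomial f₀
  set γ := lexp m g' - lexp m g with hγ
  obtain ⟨hlf, hcf, hbf⟩ := lexp_monomial_shift m hpq0 γ
  set f₀ := monomial γ (1:ℤ) * primQ g with hf₀
  have hγadd : γ + lexp m (primQ g) = lexp m g' := by
    rw [lexp_primQ m hgne, hγ]
    exact tsub_add_cancel_of_le hle
  have hlf₀ : lexp m f₀ = lexp m g' := by rw [hlf, hγadd]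
  have hf₀J : f₀ ∈ Jdl G := Ideal.mul_mem_left _ _ (primQ_mem_J hgG)
  have hcf₀ : lcoeff m f₀ = cg := hcf
  -- the gcd combination h₂
  set a := lcoeff m g' with ha
  have ha0 : a ≠ 0 := lcoeff_ne_zero m (memGt_ne_zero hGt hg')
  set u := Int.gcdA a cg with hu
  set v := Int.gcdB a cg with hv
  set e : ℤ := (Int.gcd a cg : ℤ) with he
  have hbezout : e = a * u + cg * v := Int.gcd_eq_gcd_ab a cg
  have he0 : e ≠ 0 := by
    simp only [he, ne_eq, Int.natCast_eq_zero]
    rw [Int.gcd_eq_zero_iff]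
    rintro ⟨h1, -⟩
    exact ha0 h1
  set h₂ := MvPolynomial.C u * g' + MvPolynomial.C v * f₀ with hh₂
  have hch₂ : coeff (lexp m g') h₂ = e := by
    rw [hh₂, MvPolynomial.coeff_add, MvPolynomial.coeff_C_mul, MvPolynomial.coeff_C_mul]
    have h1 : coeff (lexp m g') f₀ = cg := by rw [← hlf₀]; exact hcf₀
    have h2 : coeff (lexp m g') g' = a := rfl
    rw [h1, h2, hbezout]; ring
  have hbh₂ : ∀ d ∈ h₂.support, m.toSyn d ≤ m.toSyn (lexp m g') := by
    intro d hd
    rcases Finset.mem_union.mp (Finsupp.support_add hd) with hd1 | hd1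
    · exact le_toSyn_lexp m (support_C_mul hd1)
    · have := hbf d (support_C_mul hd1)
      rwa [hγadd] at this
  have hh₂J : h₂ ∈ Jdl G :=
    Ideal.add_mem _ (Ideal.mul_mem_left _ _ (memGt_mem_J hGt hg'))
      (Ideal.mul_mem_left _ _ hf₀J)
  have hh₂0 : h₂ ≠ 0 := fun h0 => he0 (by rw [← hch₂, h0]; simp)
  have hlh₂ : lexp m h₂ = lexp m g' := lexp_unique m (by rw [hch₂]; exact he0) hbh₂
  have hch₂' : lcoeff m h₂ = e := by rw [GB.lcoeff, hlh₂, hch₂]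
  -- cover h₂ by the strong basis
  obtain ⟨g₃, hg₃, hle₃, hdvd₃⟩ := strong_cover hGt hh₂J hh₂0
  rw [hlh₂] at hle₃
  rw [hch₂'] at hdvd₃
  have hg₃eq : g₃ = g' := by
    by_contra hne
    apply hGt.2 g₃ hg₃ g' hg' hne
    rw [LM, LM, MvPolynomial.monomial_dvd_monomial]
    exact ⟨Or.inr hle₃, hdvd₃.trans (Int.gcd_dvd_left _ _)⟩
  -- conclude : lcoeff g' divides cg, hence den g, hence denF G
  have hae : a ∣ e := by
    have := hdvd₃
    rw [hg₃eq] at this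
    exact this
  have hacg : a ∣ cg := hae.trans (Int.gcd_dvd_right _ _)
  have hadF : a ∣ (denF G : ℤ) :=
    (hacg.trans hcg_dvd).trans (Int.natCast_dvd_natCast.mpr (Finset.dvd_lcm hgG))
  exact hden (Int.natCast_dvd_natCast.mp (hpdvd.trans hadF))


/-- The saturation-style membership predicate: some `p`-coprime integer multiple of `f`
lies in the image of `J`. -/
def Mset (G : Finset (MvPolynomial (Fin n) ℚ)) (p : ℕ) (f : MvPolynomial (Fin n) ℚ) : Prop :=
  ∃ s : ℤ, ¬ (p : ℤ) ∣ s ∧ ∃ h ∈ Jdl G, phi h = MvPolynomial.C (s : ℚ) * f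

/-- `w` is `p`-integral: it has a common denominator coprime to `p`. -/
def PInt (p : ℕ) (w : MvPolynomial (Fin n) ℚ) : Prop :=
  ∃ (b : ℤ) (w₀ : MvPolynomial (Fin n) ℤ), ¬ (p : ℤ) ∣ b ∧
    phi w₀ = MvPolynomial.C (b : ℚ) * w

theorem not_dvd_one (hp : p.Prime) : ¬ (p : ℤ) ∣ 1 := by
  intro h
  have h1 : (p : ℤ) ≤ 1 := Int.le_of_dvd one_pos h
  have h2 : 2 ≤ p := hp.two_le
  omega

theorem Mset_zero (hp : p.Prime) : Mset G p (0 : MvPolynomial (Fin n) ℚ) :=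
  ⟨1, not_dvd_one hp, 0, Ideal.zero_mem _, by simp⟩

theorem Mset_add {f₁ f₂ : MvPolynomial (Fin n) ℚ} (h₁ : Mset G p f₁) (h₂ : Mset G p f₂)
    (hp : p.Prime) : Mset G p (f₁ + f₂) := by
  obtain ⟨s₁, hs₁, h₁', hJ₁, he₁⟩ := h₁
  obtain ⟨s₂, hs₂, h₂', hJ₂, he₂⟩ := h₂
  have hpZ : Prime (p : ℤ) := Nat.prime_iff_prime_int.mp hp
  refine ⟨s₁ * s₂, fun hd => ?_, MvPolynomial.C s₂ * h₁' + MvPolynomial.C s₁ * h₂',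
    Ideal.add_mem _ (Ideal.mul_mem_left _ _ hJ₁) (Ideal.mul_mem_left _ _ hJ₂), ?_⟩
  · rcases hpZ.dvd_mul.mp hd with h | h
    · exact hs₁ h
    · exact hs₂ h
  · rw [map_add, map_mul, map_mul, he₁, he₂, MvPolynomial.map_C, MvPolynomial.map_C]
    simp only [eq_intCast]
    have hcast : ((s₁ * s₂ : ℤ) : ℚ) = ((s₁ : ℤ) : ℚ) * ((s₂ : ℤ) : ℚ) := by push_cast; ring
    rw [hcast, MvPolynomial.C_mul]
    ring

theorem Mset_mem_I (hG : IsReducedGB m G I) {f : MvPolynomial (Fin n) ℚ}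
    (hf : Mset G p f) : f ∈ I := by
  obtain ⟨s, hs, h, hJ, he⟩ := hf
  have hs0 : (s : ℚ) ≠ 0 := by
    intro h0
    exact hs (by rw [show s = 0 by exact_mod_cast h0]; exact dvd_zero _)
  have : f = MvPolynomial.C (s : ℚ)⁻¹ * phi h := by
    rw [he, ← mul_assoc, ← MvPolynomial.C_mul, inv_mul_cancel₀ hs0]
    simp
  rw [this]
  exact Ideal.mul_mem_left _ _ (phi_J_mem_I hG hJ)

theorem den_dvd_of_eq_int_mul {k s : ℤ} {q : ℚ} (hs : s ≠ 0)
    (h : ((k : ℤ) : ℚ) = (s : ℚ) * q) : ((q.den : ℤ)) ∣ s := by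
  have hq : q = (k : ℚ) / (s : ℚ) := by
    rw [eq_div_iff (by exact_mod_cast hs), h]
    ring
  have := Rat.den_dvd k s
  rwa [Rat.divInt_eq_div, ← hq] at this

theorem Mset_den {f : MvPolynomial (Fin n) ℚ} (hf : Mset G p f) (d : Fin n →₀ ℕ) :
    ¬ p ∣ (MvPolynomial.coeff d f).den := by
  obtain ⟨s, hs, h, hJ, he⟩ := hf
  have hs0 : s ≠ 0 := fun h0 => hs (h0 ▸ dvd_zero _)
  have hc : ((MvPolynomial.coeff d h : ℤ) : ℚ) = (s : ℚ) * MvPolynomial.coeff d f := by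
    have := congrArg (MvPolynomial.coeff d) he
    rwa [coeff_phi, MvPolynomial.coeff_C_mul] at this
  have hdvd : ((MvPolynomial.coeff d f).den : ℤ) ∣ s := den_dvd_of_eq_int_mul hs0 hc
  intro hpd
  exact hs ((Int.natCast_dvd_natCast.mpr hpd).trans hdvd)

theorem PInt_neg {w : MvPolynomial (Fin n) ℚ} (h : PInt p w) : PInt p (-w) := by
  obtain ⟨b, w₀, hb, he⟩ := h
  exact ⟨b, -w₀, hb, by rw [map_neg, he]; ring⟩

theorem PInt_add {w₁ w₂ : MvPolynomial (Fin n) ℚ} (h₁ : PInt p w₁) (h₂ : PInt p w₂)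
    (hp : p.Prime) : PInt p (w₁ + w₂) := by
  obtain ⟨b₁, v₁, hb₁, he₁⟩ := h₁
  obtain ⟨b₂, v₂, hb₂, he₂⟩ := h₂
  have hpZ : Prime (p : ℤ) := Nat.prime_iff_prime_int.mp hp
  refine ⟨b₁ * b₂, MvPolynomial.C b₂ * v₁ + MvPolynomial.C b₁ * v₂, fun hd => ?_, ?_⟩
  · rcases hpZ.dvd_mul.mp hd with h | h
    · exact hb₁ h
    · exact hb₂ h
  · rw [map_add, map_mul, map_mul, he₁, he₂, MvPolynomial.map_C, MvPolynomial.map_C]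
    simp only [eq_intCast]
    have hcast : ((b₁ * b₂ : ℤ) : ℚ) = ((b₁ : ℤ) : ℚ) * ((b₂ : ℤ) : ℚ) := by push_cast; ring
    rw [hcast, MvPolynomial.C_mul]
    ring

theorem PInt_sub {w₁ w₂ : MvPolynomial (Fin n) ℚ} (h₁ : PInt p w₁) (h₂ : PInt p w₂)
    (hp : p.Prime) : PInt p (w₁ - w₂) := by
  rw [sub_eq_add_neg]
  exact PInt_add h₁ (PInt_neg h₂) hp

/-- Main reduction: every `p`-integral polynomial decomposes as an element of the
saturation of `J` plus a polynomial supported on normal monomials. -/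
theorem claimU (hG : IsReducedGB m G I) (hGt : IsMinStrongGB m Gt (Jdl G))
    (hp : p.Prime) (hlucky : ∀ g' ∈ Gt, ¬ (p : ℤ) ∣ lcoeff m g') :
    ∀ w : MvPolynomial (Fin n) ℚ, PInt p w →
      ∃ u v : MvPolynomial (Fin n) ℚ, w = u + v ∧ Mset G p u ∧
        ∀ d ∈ v.support, ¬ ∃ g ∈ G, lexp m g ≤ d := by
  have main : ∀ b : m.syn, ∀ w : MvPolynomial (Fin n) ℚ, m.toSyn (lexp m w) = b →
      PInt p w → ∃ u v : MvPolynomial (Fin n) ℚ, w = u + v ∧ Mset G p u ∧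
        ∀ d ∈ v.support, ¬ ∃ g ∈ G, lexp m g ≤ d := by
    intro b
    induction b using WellFoundedLT.induction with
    | _ b IH =>
    intro w hwb hw
    by_cases hw0 : w = 0
    · exact ⟨0, 0, by simp [hw0], Mset_zero hp, by simp⟩
    set a := GB.lcoeff m w with ha
    have ha0 : a ≠ 0 := lcoeff_ne_zero m hw0
    obtain ⟨b₀, w₀, hb₀, hrep⟩ := hw
    have hb₀0 : (b₀ : ℚ) ≠ 0 := by
      intro h0
      exact hb₀ (by rw [show b₀ = 0 by exact_mod_cast h0]; exact dvd_zero _)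
    set t := MvPolynomial.coeff (lexp m w) w₀ with hT
    have ht : ((t : ℤ) : ℚ) = (b₀ : ℚ) * a := by
      have := congrArg (MvPolynomial.coeff (lexp m w)) hrep
      rwa [coeff_phi, MvPolynomial.coeff_C_mul] at this
    by_cases hnorm : ∃ g ∈ G, lexp m g ≤ lexp m w
    · -- reduction by the strong basis
      obtain ⟨g₂, hg₂G, hle₂⟩ := hnorm
      have hg₂ne : g₂ ≠ 0 := memG_ne_zero hG hg₂G
      have hpq2 : primQ g₂ ≠ 0 := primQ_ne_zero hg₂ne
      obtain ⟨hlf₁, hcf₁, hbf₁⟩ := lexp_monomial_shift m hpq2 (lexp m w - lexp m g₂)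
      set f₁ := monomial (lexp m w - lexp m g₂) (1:ℤ) * primQ g₂ with hf₁def
      have hγ₂ : (lexp m w - lexp m g₂) + lexp m (primQ g₂) = lexp m w := by
        rw [lexp_primQ m hg₂ne]
        exact tsub_add_cancel_of_le hle₂
      have hf₁0 : f₁ ≠ 0 := by
        intro h0
        apply lcoeff_ne_zero m hpq2
        rw [← hcf₁, h0, GB.lcoeff]
        simp
      have hf₁J : f₁ ∈ Jdl G := Ideal.mul_mem_left _ _ (primQ_mem_J hg₂G)
      obtain ⟨g', hg'Gt, hle', -⟩ := strong_cover hGt hf₁J hf₁0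
      rw [hlf₁, hγ₂] at hle'
      set c := GB.lcoeff m g' with hc
      have hg'0 : g' ≠ 0 := memGt_ne_zero hGt hg'Gt
      have hc0 : (c : ℚ) ≠ 0 := by exact_mod_cast lcoeff_ne_zero m hg'0
      have hpc : ¬ (p : ℤ) ∣ c := hlucky g' hg'Gt
      obtain ⟨hlf₀, hcf₀, hbf₀⟩ := lexp_monomial_shift m hg'0 (lexp m w - lexp m g')
      set f₀ := monomial (lexp m w - lexp m g') (1:ℤ) * g' with hf₀def
      have hγ' : (lexp m w - lexp m g') + lexp m g' = lexp m w := tsub_add_cancel_of_le hle'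
      have hf₀J : f₀ ∈ Jdl G := Ideal.mul_mem_left _ _ (memGt_mem_J hGt hg'Gt)
      have hcoefff₀ : MvPolynomial.coeff (lexp m w) f₀ = c := by
        have : lexp m f₀ = lexp m w := by rw [hlf₀, hγ']
        rw [← this]
        exact hcf₀
      set q : ℚ := ((t : ℤ) : ℚ) / (((b₀ * c : ℤ) : ℤ) : ℚ) with hq
      set T := MvPolynomial.C q * phi f₀ with hTdef
      have hbc0 : ((b₀ * c : ℤ) : ℚ) ≠ 0 := by
        push_cast
        exact mul_ne_zero hb₀0 hc0
      have hpbc : ¬ (p : ℤ) ∣ (b₀ * c) := by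
        intro hd
        rcases (Nat.prime_iff_prime_int.mp hp).dvd_mul.mp hd with h | h
        · exact hb₀ h
        · exact hpc h
      have hCeq : MvPolynomial.C ((b₀ * c : ℤ) : ℚ) * T = MvPolynomial.C ((t : ℤ) : ℚ) * phi f₀ := by
        rw [hTdef, ← mul_assoc, ← MvPolynomial.C_mul, hq]
        rw [mul_div_cancel₀ _ hbc0]
      have hMT : Mset G p T :=
        ⟨b₀ * c, hpbc, MvPolynomial.C t * f₀, Ideal.mul_mem_left _ _ hf₀J, by
          rw [map_mul, MvPolynomial.map_C, hCeq]
          norm_cast⟩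
      have hPT : PInt p T :=
        ⟨b₀ * c, MvPolynomial.C t * f₀, hpbc, by
          rw [map_mul, MvPolynomial.map_C, hCeq]
          norm_cast⟩
      have hcoeffT : MvPolynomial.coeff (lexp m w) T = a := by
        rw [hTdef, MvPolynomial.coeff_C_mul, coeff_phi, hcoefff₀, hq, ht]
        push_cast
        field_simp
      set w₁ := w - T with hw₁def
      have hPw₁ : PInt p w₁ := PInt_sub ⟨b₀, w₀, hb₀, hrep⟩ hPT hp
      have hc₁ : MvPolynomial.coeff (lexp m w) w₁ = 0 := by
        rw [hw₁def, MvPolynomial.coeff_sub, hcoeffT]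
        exact sub_self a
      have hb₁ : ∀ d ∈ w₁.support, m.toSyn d ≤ m.toSyn (lexp m w) := by
        intro d hd
        rcases Finset.mem_union.mp (MvPolynomial.support_sub _ _ _ hd) with hd1 | hd1
        · exact le_toSyn_lexp m hd1
        · have hd2 : d ∈ (phi f₀).support := support_C_mul hd1
          rw [support_phi] at hd2
          have := hbf₀ d hd2
          rwa [hγ'] at this
      by_cases hw₁0 : w₁ = 0
      · refine ⟨T, 0, ?_, hMT, by simp⟩
        have : w = T := by
          have := sub_eq_zero.mp hw₁0
          exact this
        rw [this, add_zero]
      · have hlt : m.toSyn (lexp m w₁) < b := by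
          rw [← hwb]
          exact lexp_lt m hw₁0 hc₁ hb₁
        obtain ⟨u, v, hdecomp, hMu, hNv⟩ := IH _ hlt w₁ rfl hPw₁
        refine ⟨u + T, v, ?_, Mset_add hMu hMT hp, hNv⟩
        have h1 : w = (u + v) + T := by
          rw [← hdecomp, hw₁def]
          ring
        rw [h1]
        ring
    · -- the leading monomial is normal
      set Mon := monomial (lexp m w) a with hMon
      have hPMon : PInt p Mon := by
        refine ⟨b₀, monomial (lexp m w) t, hb₀, ?_⟩
        rw [phi, MvPolynomial.map_monomial, hMon, MvPolynomial.C_mul_monomial]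
        rw [show (Int.castRingHom ℚ) t = ((t : ℤ) : ℚ) from rfl, ht]
      set w₁ := w - Mon with hw₁def
      have hPw₁ : PInt p w₁ := PInt_sub ⟨b₀, w₀, hb₀, hrep⟩ hPMon hp
      have hc₁ : MvPolynomial.coeff (lexp m w) w₁ = 0 := by
        rw [hw₁def, MvPolynomial.coeff_sub, hMon, MvPolynomial.coeff_monomial]
        simp [ha, GB.lcoeff]
      have hb₁ : ∀ d ∈ w₁.support, m.toSyn d ≤ m.toSyn (lexp m w) := by
        intro d hd
        rcases Finset.mem_union.mp (MvPolynomial.support_sub _ _ _ hd) with hd1 | hd1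
        · exact le_toSyn_lexp m hd1
        · have := MvPolynomial.support_monomial_subset hd1
          rw [Finset.mem_singleton] at this
          rw [this]
      have hMonNormal : ∀ d ∈ Mon.support, ¬ ∃ g ∈ G, lexp m g ≤ d := by
        intro d hd
        have := MvPolynomial.support_monomial_subset hd
        rw [Finset.mem_singleton] at this
        rw [this]
        exact hnorm
      by_cases hw₁0 : w₁ = 0
      · refine ⟨0, Mon, ?_, Mset_zero hp, hMonNormal⟩
        have : w = Mon := sub_eq_zero.mp hw₁0
        rw [this, zero_add]
      · have hlt : m.toSyn (lexp m w₁) < b := by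
          rw [← hwb]
          exact lexp_lt m hw₁0 hc₁ hb₁
        obtain ⟨u, v, hdecomp, hMu, hNv⟩ := IH _ hlt w₁ rfl hPw₁
        refine ⟨u, v + Mon, ?_, hMu, ?_⟩
        · have h1 : w = (u + v) + Mon := by
            rw [← hdecomp, hw₁def]
            ring
          rw [h1]
          ring
        · intro d hd
          rcases Finset.mem_union.mp (Finsupp.support_add hd) with hd1 | hd1
          · exact hNv d hd1
          · exact hMonNormal d hd1
  intro w hw
  exact main _ w rfl hw

/-- Direction 1: if `p` is Pauer-lucky then `p` does not divide `den G`. -/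
theorem dir1 (hG : IsReducedGB m G I) (hGt : IsMinStrongGB m Gt (Jdl G))
    (hp : p.Prime) (hlucky : ∀ g' ∈ Gt, ¬ (p : ℤ) ∣ lcoeff m g') :
    ¬ p ∣ denF G := by
  rw [prime_dvd_denF_iff hp]
  rintro ⟨g, hgG, hpden⟩
  have hgne : g ≠ 0 := memG_ne_zero hG hgG
  have hmono : GB.lcoeff m g = 1 := hG.2.1 g hgG
  -- decompose the leading monomial of g
  have hPmon : PInt p (monomial (lexp m g) (1 : ℚ)) := by
    refine ⟨1, monomial (lexp m g) 1, not_dvd_one hp, ?_⟩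
    rw [phi, MvPolynomial.map_monomial, MvPolynomial.C_mul_monomial]
    norm_num
  obtain ⟨u, v, hdec, hMu, hNv⟩ := claimU hG hGt hp hlucky _ hPmon
  set z := g - u with hzdef
  have hzI : z ∈ I := Submodule.sub_mem _ (memG_mem_I hG hgG) (Mset_mem_I hG hMu)
  have hzsupp : ∀ d ∈ z.support, ¬ ∃ g₃ ∈ G, lexp m g₃ ≤ d := by
    intro d hd
    have hz2 : z = (g - monomial (lexp m g) (1 : ℚ)) + v := by
      rw [hzdef, hdec]
      ring
    rw [hz2] at hd
    rcases Finset.mem_union.mp (Finsupp.support_add hd) with hd1 | hd1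
    · -- d is in the tail of g
      have hd1' : MvPolynomial.coeff d g - (if lexp m g = d then (1:ℚ) else 0) ≠ 0 := by
        have := MvPolynomial.mem_support_iff.mp (show d ∈ (g - monomial (lexp m g) (1:ℚ)).support from hd1)
        rwa [MvPolynomial.coeff_sub, MvPolynomial.coeff_monomial] at this
      have hdne : d ≠ lexp m g := by
        intro h0
        apply hd1'
        rw [if_pos h0.symm, h0, ← GB.lcoeff, hmono, sub_self]
      have hdg : MvPolynomial.coeff d g ≠ 0 := by
        rw [if_neg (fun h => hdne h.symm), sub_zero] at hd1'
        exact hd1'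
      rintro ⟨g₃, hg₃G, hle₃⟩
      by_cases hgg : g₃ = g
      · subst hgg
        apply hdne
        have h1 : m.toSyn (lexp m g₃) ≤ m.toSyn d := m.toSyn_monotone hle₃
        have h2 : m.toSyn d ≤ m.toSyn (lexp m g₃) :=
          le_toSyn_lexp m (by rwa [MvPolynomial.mem_support_iff])
        exact m.toSyn.injective (le_antisymm h2 h1)
      · exact hG.2.2 g hgG d (by rwa [MvPolynomial.mem_support_iff]) g₃ hg₃G hgg hle₃
    · exact hNv d hd1
  have hz0 : z = 0 := by
    by_contra hz
    obtain ⟨g₄, hg₄G, hle₄⟩ := hG.1.2.2.2 z hzI hz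
    exact hzsupp (lexp m z) (lexp_mem_support m hz) ⟨g₄, hg₄G, hle₄⟩
  have hgu : g = u := sub_eq_zero.mp hz0
  have hMg : Mset G p g := hgu ▸ hMu
  -- contradiction with p ∣ den g
  rw [prime_dvd_den_iff hp] at hpden
  obtain ⟨d₀, hd₀, hpd₀⟩ := hpden
  exact Mset_den hMg d₀ hpd₀

end Main

end GBAux

/-- `p` is σ-Pauer-lucky for `prim(G_σ)` iff `p` is σ-good for `⟨F⟩`. -/
theorem stmt13 {n : ℕ} (m : MonomialOrder (Fin n))
    (F : Finset (MvPolynomial (Fin n) ℚ)) (hF0 : (0 : MvPolynomial (Fin n) ℚ) ∉ F)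
    (G : Finset (MvPolynomial (Fin n) ℚ))
    (hG : GB.IsReducedGB m G (Ideal.span (F : Set (MvPolynomial (Fin n) ℚ))))
    (Gt : Finset (MvPolynomial (Fin n) ℤ))
    (hGt : GB.IsMinStrongGB m Gt
      (Ideal.span (GB.primQ '' (G : Set (MvPolynomial (Fin n) ℚ)))))
    (p : ℕ) (hp : p.Prime) :
    ((∀ g ∈ Gt, ¬ (p : ℤ) ∣ GB.lcoeff m g) ↔ ¬ p ∣ GB.denF G) := by
  have hGt' : GB.IsMinStrongGB m Gt (GBAux.Jdl G) := hGt
  constructor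
  · intro hlucky
    exact GBAux.dir1 hG hGt' hp hlucky
  · intro hden
    exact GBAux.dir2 hG hGt' hp hden
end

section
/- Let σ be a term ordering, F a finite set of nonzero polynomials in Q[x_1,...,x_n], and p a prime. If p is σ-Pauer-lucky for prim(F), then p is σ-good for the ideal ⟨F⟩. -/
open MvPolynomial
open scoped Classical

section Aux

open GB

variable {n : ℕ} (m : MonomialOrder (Fin n))

lemma toSyn_lexp {K : Type*} [CommSemiring K] (f : MvPolynomial (Fin n) K) :
    m.toSyn (lexp m f) = f.support.sup fun d => m.toSyn d :=
  m.toSyn.apply_symm_apply _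

lemma le_toSyn_lexp {K : Type*} [CommSemiring K] {f : MvPolynomial (Fin n) K} {d}
    (hd : d ∈ f.support) : m.toSyn d ≤ m.toSyn (lexp m f) := by
  rw [toSyn_lexp]; exact Finset.le_sup hd

lemma lexp_mem {K : Type*} [CommSemiring K] {f : MvPolynomial (Fin n) K} (hf : f ≠ 0) :
    lexp m f ∈ f.support := by
  obtain ⟨d, hd, he⟩ := Finset.exists_mem_eq_sup f.support
    (MvPolynomial.support_nonempty.mpr hf) fun d => m.toSyn d
  have h2 : lexp m f = d := by rw [lexp, he]; exact m.toSyn.symm_apply_apply d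
  rw [h2]; exact hd

lemma lcoeff_ne_zero {K : Type*} [CommSemiring K] {f : MvPolynomial (Fin n) K} (hf : f ≠ 0) :
    lcoeff m f ≠ 0 := MvPolynomial.mem_support_iff.mp (lexp_mem m hf)

lemma lexp_eq_of_max {K : Type*} [CommSemiring K] {f : MvPolynomial (Fin n) K} {d}
    (hd : d ∈ f.support) (h : ∀ e ∈ f.support, m.toSyn e ≤ m.toSyn d) :
    lexp m f = d := by
  have h1 : m.toSyn (lexp m f) ≤ m.toSyn d := by rw [toSyn_lexp]; exact Finset.sup_le h
  exact m.toSyn.injective (le_antisymm h1 (le_toSyn_lexp m hd))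

lemma monomial_dvd_monomial {a b : Fin n →₀ ℕ} {c d : ℤ} (hd : d ≠ 0)
    (h : (MvPolynomial.monomial a c : MvPolynomial (Fin n) ℤ) ∣ MvPolynomial.monomial b d) :
    a ≤ b ∧ c ∣ d := by
  obtain ⟨w, hw⟩ := h
  have h1 := congrArg (MvPolynomial.coeff b) hw
  rw [MvPolynomial.coeff_monomial, if_pos rfl, MvPolynomial.coeff_monomial_mul'] at h1
  by_cases hab : a ≤ b
  · rw [if_pos hab] at h1
    exact ⟨hab, ⟨MvPolynomial.coeff (b - a) w, h1⟩⟩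
  · rw [if_neg hab] at h1; exact absurd h1 hd

lemma cancel_lemma {R : Type*} [CommRing R] {f t : MvPolynomial (Fin n) R} {q : R}
    (hle : lexp m t ≤ lexp m f) (hq : q * lcoeff m t = lcoeff m f) :
    MvPolynomial.coeff (lexp m f)
        (f - MvPolynomial.monomial (lexp m f - lexp m t) q * t) = 0 ∧
      ∀ d ∈ (f - MvPolynomial.monomial (lexp m f - lexp m t) q * t).support,
        m.toSyn d ≤ m.toSyn (lexp m f) := by
  set δ := lexp m f - lexp m t with hδ
  have hδle : δ ≤ lexp m f := tsub_le_self
  have hsub : lexp m f - δ = lexp m t := tsub_tsub_cancel_of_le hle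
  have hadd : δ + lexp m t = lexp m f := by
    rw [hδ, tsub_add_cancel_of_le hle]
  constructor
  · rw [MvPolynomial.coeff_sub, MvPolynomial.coeff_monomial_mul', if_pos hδle, hsub]
    simp only [GB.lcoeff] at hq
    rw [hq]
    exact sub_self _
  · intro d hd
    rw [MvPolynomial.mem_support_iff, MvPolynomial.coeff_sub,
      MvPolynomial.coeff_monomial_mul'] at hd
    by_cases hdf : MvPolynomial.coeff d f ≠ 0
    · exact le_toSyn_lexp m (MvPolynomial.mem_support_iff.mpr hdf)
    · push_neg at hdf
      rw [hdf, zero_sub, neg_ne_zero] at hd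
      split_ifs at hd with hδd
      · have ht' : MvPolynomial.coeff (d - δ) t ≠ 0 := right_ne_zero_of_mul hd
        have h2 : m.toSyn (d - δ) ≤ m.toSyn (lexp m t) :=
          le_toSyn_lexp m (MvPolynomial.mem_support_iff.mpr ht')
        calc m.toSyn d = m.toSyn (δ + (d - δ)) := by rw [add_tsub_cancel_of_le hδd]
          _ = m.toSyn δ + m.toSyn (d - δ) := map_add _ _ _
          _ ≤ m.toSyn δ + m.toSyn (lexp m t) := add_le_add_right h2 _
          _ = m.toSyn (δ + lexp m t) := (map_add _ _ _).symm
          _ = m.toSyn (lexp m f) := by rw [hadd]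
      · exact absurd rfl hd

lemma cancel_lt {R : Type*} [CommRing R] {f t : MvPolynomial (Fin n) R} {q : R}
    (hle : lexp m t ≤ lexp m f) (hq : q * lcoeff m t = lcoeff m f)
    (hne : f - MvPolynomial.monomial (lexp m f - lexp m t) q * t ≠ 0) :
    m.toSyn (lexp m (f - MvPolynomial.monomial (lexp m f - lexp m t) q * t)) <
      m.toSyn (lexp m f) := by
  obtain ⟨h0, hbd⟩ := cancel_lemma m hle hq
  have h1 := hbd _ (lexp_mem m hne)
  refine lt_of_le_of_ne h1 fun he => ?_
  have h2 := m.toSyn.injective he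
  exact lcoeff_ne_zero m hne (by simp only [GB.lcoeff]; rw [h2]; exact h0)

lemma lexp_C_mul {R : Type*} [CommSemiring R] {c : R} {f : MvPolynomial (Fin n) R}
    (h : c * lcoeff m f ≠ 0) :
    lexp m (MvPolynomial.C c * f) = lexp m f ∧
      lcoeff m (MvPolynomial.C c * f) = c * lcoeff m f := by
  have hmem : lexp m f ∈ (MvPolynomial.C c * f).support := by
    rw [MvPolynomial.mem_support_iff, MvPolynomial.coeff_C_mul]; exact h
  have heq : lexp m (MvPolynomial.C c * f) = lexp m f := lexp_eq_of_max m hmem fun e he => by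
    rw [MvPolynomial.mem_support_iff, MvPolynomial.coeff_C_mul] at he
    exact le_toSyn_lexp m (MvPolynomial.mem_support_iff.mpr (right_ne_zero_of_mul he))
  exact ⟨heq, by simp only [GB.lcoeff]; rw [heq, MvPolynomial.coeff_C_mul]⟩

lemma coeff_sum_monomial {R : Type*} [CommSemiring R] (s : Finset (Fin n →₀ ℕ))
    (v : (Fin n →₀ ℕ) → R) (e : Fin n →₀ ℕ) :
    MvPolynomial.coeff e (s.sum fun d => MvPolynomial.monomial d (v d)) =
      if e ∈ s then v e else 0 := by
  rw [MvPolynomial.coeff_sum]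
  rw [Finset.sum_congr rfl fun d _ => MvPolynomial.coeff_monomial e d (v d)]
  exact Finset.sum_ite_eq' s e v

end Aux

section Aux2

open GB

variable {n : ℕ} (m : MonomialOrder (Fin n))

lemma den_ne_zero (f : MvPolynomial (Fin n) ℚ) : GB.den f ≠ 0 := by
  intro h
  rw [GB.den, Finset.lcm_eq_zero_iff] at h
  obtain ⟨d, -, h0⟩ := h
  exact absurd h0 (Rat.den_pos _).ne'

lemma num_mul_natCast {x : ℚ} {c : ℕ} (h : x.den ∣ c) : (((x * c).num : ℤ) : ℚ) = x * c := by
  obtain ⟨k, hk⟩ := h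
  have hden : ((x.den : ℚ)) ≠ 0 := Nat.cast_ne_zero.mpr (Rat.den_pos x).ne'
  have h2 : x * (x.den : ℚ) = (x.num : ℚ) := by
    have h0 := Rat.num_div_den x
    rw [div_eq_iff hden] at h0
    exact h0.symm
  have h1 : x * (c : ℚ) = ((x.num * k : ℤ) : ℚ) := by
    rw [hk]; push_cast; rw [← mul_assoc, h2]
  rw [h1, Rat.num_intCast]

lemma coeff_intScale (f : MvPolynomial (Fin n) ℚ) (e : Fin n →₀ ℕ) :
    MvPolynomial.coeff e (GB.intScale f) =
      if e ∈ f.support then (MvPolynomial.coeff e f * (GB.den f : ℚ)).num else 0 := by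
  rw [GB.intScale]
  exact coeff_sum_monomial _ _ e

lemma map_intScale (f : MvPolynomial (Fin n) ℚ) :
    MvPolynomial.map (Int.castRingHom ℚ) (GB.intScale f) =
      MvPolynomial.C ((GB.den f : ℕ) : ℚ) * f := by
  apply MvPolynomial.ext
  intro e
  rw [MvPolynomial.coeff_map, coeff_intScale, MvPolynomial.coeff_C_mul]
  by_cases he : e ∈ f.support
  · rw [if_pos he]
    have hdvd : (MvPolynomial.coeff e f).den ∣ GB.den f := Finset.dvd_lcm he
    simp only [Int.coe_castRingHom]
    rw [num_mul_natCast hdvd, mul_comm]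
  · rw [if_neg he, MvPolynomial.notMem_support_iff.mp he, mul_zero]
    simp

lemma C_gcd_mul_primQ (f : MvPolynomial (Fin n) ℚ) :
    MvPolynomial.C ((GB.intScale f).support.gcd fun e => MvPolynomial.coeff e (GB.intScale f)) *
      GB.primQ f = GB.intScale f := by
  apply MvPolynomial.ext
  intro e
  rw [MvPolynomial.coeff_C_mul, GB.primQ, coeff_sum_monomial]
  by_cases he : e ∈ (GB.intScale f).support
  · rw [if_pos he]
    exact Int.mul_ediv_cancel' (Finset.gcd_dvd he)
  · rw [if_neg he, mul_zero]
    exact (MvPolynomial.notMem_support_iff.mp he).symm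

lemma prime_dvd_lcm {α : Type*} {p : ℕ} (hp : p.Prime) (s : Finset α) (fn : α → ℕ)
    (h : p ∣ s.lcm fn) : ∃ a ∈ s, p ∣ fn a := by
  have h2 : s.lcm fn ∣ ∏ a ∈ s, fn a :=
    Finset.lcm_dvd fun b hb => Finset.dvd_prod_of_mem fn hb
  exact hp.prime.exists_mem_finset_dvd (h.trans h2)

lemma exists_coprime_coeff {p : ℕ} (hp : p.Prime) (f : MvPolynomial (Fin n) ℚ)
    (hpc : p ∣ GB.den f) :
    ∃ d ∈ f.support, ¬ (p:ℤ) ∣ MvPolynomial.coeff d (GB.intScale f) := by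
  by_contra hcon
  push_neg at hcon
  have hc0 : GB.den f ≠ 0 := den_ne_zero f
  obtain ⟨c', hc'⟩ := hpc
  have hc'0 : c' ≠ 0 := by rintro rfl; rw [mul_zero] at hc'; exact hc0 hc'
  have hc'Q : ((c' : ℚ)) ≠ 0 := Nat.cast_ne_zero.mpr hc'0
  have key : ∀ d ∈ f.support, (MvPolynomial.coeff d f).den ∣ c' := by
    intro d hd
    obtain ⟨w, hw⟩ := hcon d hd
    rw [coeff_intScale, if_pos hd] at hw
    have hden : (MvPolynomial.coeff d f).den ∣ GB.den f := Finset.dvd_lcm hd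
    have h1 : MvPolynomial.coeff d f * ((GB.den f : ℕ) : ℚ) = ((p:ℚ)) * (w : ℚ) := by
      rw [← num_mul_natCast hden, hw]; push_cast; ring
    have hp0 : ((p:ℚ)) ≠ 0 := Nat.cast_ne_zero.mpr hp.pos.ne'
    have h2 : MvPolynomial.coeff d f * (c' : ℚ) = (w : ℚ) := by
      apply mul_left_cancel₀ hp0
      rw [hc', Nat.cast_mul] at h1
      rw [← h1]; ring
    have h3 : MvPolynomial.coeff d f = (w : ℚ) / ((c' : ℤ) : ℚ) := by
      push_cast
      rw [← h2]
      field_simp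
    have h4 := Rat.den_dvd w (c' : ℤ)
    rw [Rat.divInt_eq_div, ← h3] at h4
    exact_mod_cast h4
  have h5 : GB.den f ∣ c' := by
    rw [GB.den]; exact Finset.lcm_dvd key
  have h6 : GB.den f ≤ c' := Nat.le_of_dvd (Nat.pos_of_ne_zero hc'0) h5
  have h7 := hp.two_le
  have h8 : 2 * c' ≤ p * c' := Nat.mul_le_mul_right _ h7
  omega

end Aux2

section Aux3

open GB

variable {n : ℕ} (m : MonomialOrder (Fin n))

lemma not_int_dvd_one {p : ℕ} (hp : p.Prime) : ¬ (p:ℤ) ∣ 1 := fun h =>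
  hp.ne_one (Nat.dvd_one.mp (by exact_mod_cast h))

lemma mainLem {Gt : Finset (MvPolynomial (Fin n) ℤ)} {J : Ideal (MvPolynomial (Fin n) ℤ)}
    (hGt : GB.IsStrongGB m Gt J) {p : ℕ} (hp : p.Prime)
    (hlucky : ∀ g ∈ Gt, ¬ (p:ℤ) ∣ GB.lcoeff m g) :
    ∀ f : MvPolynomial (Fin n) ℤ, (∃ M : ℤ, M ≠ 0 ∧ MvPolynomial.C M * f ∈ J) →
      ∃ u : ℤ, ¬ (p:ℤ) ∣ u ∧ MvPolynomial.C u * f ∈ J := by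
  suffices H : ∀ s : m.syn, ∀ f : MvPolynomial (Fin n) ℤ, m.toSyn (GB.lexp m f) = s →
      (∃ M : ℤ, M ≠ 0 ∧ MvPolynomial.C M * f ∈ J) →
      ∃ u : ℤ, ¬ (p:ℤ) ∣ u ∧ MvPolynomial.C u * f ∈ J by
    exact fun f hf => H _ f rfl hf
  intro s
  induction s using WellFoundedLT.induction with
  | _ s IH =>
  rintro f rfl ⟨M, hM, hMf⟩
  by_cases hf0 : f = 0
  · exact ⟨1, not_int_dvd_one hp, by rw [hf0, mul_zero]; exact J.zero_mem⟩
  have hlf : GB.lcoeff m f ≠ 0 := lcoeff_ne_zero m hf0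
  have hMlf : M * GB.lcoeff m f ≠ 0 := mul_ne_zero hM hlf
  obtain ⟨hle', hlc'⟩ := lexp_C_mul m (c := M) (f := f) hMlf
  have hCM : (MvPolynomial.C M : MvPolynomial (Fin n) ℤ) ≠ 0 := by simpa using hM
  have hCMf : MvPolynomial.C M * f ≠ 0 := mul_ne_zero hCM hf0
  obtain ⟨t, ht, hdvd⟩ := hGt.2.2 _ hMf hCMf
  have ht0 : t ≠ 0 := fun h => hGt.1 (h ▸ ht)
  have hltc : GB.lcoeff m t ≠ 0 := lcoeff_ne_zero m ht0
  have htJ : t ∈ J := hGt.2.1 ▸ Ideal.subset_span ht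
  simp only [GB.LM] at hdvd
  rw [hle', hlc'] at hdvd
  obtain ⟨hlele, -⟩ := monomial_dvd_monomial hMlf hdvd
  have hF2lf : GB.lcoeff m t * GB.lcoeff m f ≠ 0 := mul_ne_zero hltc hlf
  obtain ⟨hF2e, hF2c⟩ := lexp_C_mul m (c := GB.lcoeff m t) (f := f) hF2lf
  have hle2 : GB.lexp m t ≤ GB.lexp m (MvPolynomial.C (GB.lcoeff m t) * f) := by
    rw [hF2e]; exact hlele
  have hq2 : GB.lcoeff m f * GB.lcoeff m t =
      GB.lcoeff m (MvPolynomial.C (GB.lcoeff m t) * f) := by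
    rw [hF2c]; ring
  by_cases hf'0 : MvPolynomial.C (GB.lcoeff m t) * f -
      MvPolynomial.monomial
        (GB.lexp m (MvPolynomial.C (GB.lcoeff m t) * f) - GB.lexp m t)
        (GB.lcoeff m f) * t = 0
  · refine ⟨GB.lcoeff m t, hlucky t ht, ?_⟩
    rw [sub_eq_zero.mp hf'0]
    exact Ideal.mul_mem_left _ _ htJ
  · have hlt : m.toSyn (GB.lexp m (MvPolynomial.C (GB.lcoeff m t) * f -
        MvPolynomial.monomial
          (GB.lexp m (MvPolynomial.C (GB.lcoeff m t) * f) - GB.lexp m t)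
          (GB.lcoeff m f) * t)) < m.toSyn (GB.lexp m f) := by
      exact lt_of_lt_of_eq (cancel_lt m hle2 hq2 hf'0) (congrArg m.toSyn hF2e)
    have hMf' : MvPolynomial.C M * (MvPolynomial.C (GB.lcoeff m t) * f -
        MvPolynomial.monomial
          (GB.lexp m (MvPolynomial.C (GB.lcoeff m t) * f) - GB.lexp m t)
          (GB.lcoeff m f) * t) ∈ J := by
      have heq : MvPolynomial.C M * (MvPolynomial.C (GB.lcoeff m t) * f -
          MvPolynomial.monomial
            (GB.lexp m (MvPolynomial.C (GB.lcoeff m t) * f) - GB.lexp m t)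
            (GB.lcoeff m f) * t) =
          MvPolynomial.C (GB.lcoeff m t) * (MvPolynomial.C M * f) -
          (MvPolynomial.monomial
            (GB.lexp m (MvPolynomial.C (GB.lcoeff m t) * f) - GB.lexp m t)
            (GB.lcoeff m f) * MvPolynomial.C M) * t := by ring
      rw [heq]
      exact sub_mem (Ideal.mul_mem_left _ _ hMf) (Ideal.mul_mem_left _ _ htJ)
    obtain ⟨u', hu', hJ'⟩ := IH _ hlt _ rfl ⟨M, hM, hMf'⟩
    refine ⟨u' * GB.lcoeff m t, ?_, ?_⟩
    · intro h
      rcases (Nat.prime_iff_prime_int.mp hp).dvd_mul.mp h with h | h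
      · exact hu' h
      · exact hlucky t ht h
    · have heq2 : MvPolynomial.C (u' * GB.lcoeff m t) * f =
          MvPolynomial.C u' * (MvPolynomial.C (GB.lcoeff m t) * f -
            MvPolynomial.monomial
              (GB.lexp m (MvPolynomial.C (GB.lcoeff m t) * f) - GB.lexp m t)
              (GB.lcoeff m f) * t) +
          (MvPolynomial.monomial
            (GB.lexp m (MvPolynomial.C (GB.lcoeff m t) * f) - GB.lexp m t)
            (GB.lcoeff m f) * MvPolynomial.C u') * t := by
        rw [MvPolynomial.C_mul]; ring
      rw [heq2]
      exact add_mem hJ' (Ideal.mul_mem_left _ _ htJ)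

lemma claimB {Gt : Finset (MvPolynomial (Fin n) ℤ)} {J : Ideal (MvPolynomial (Fin n) ℤ)}
    (hGt : GB.IsStrongGB m Gt J) {p : ℕ} (hp : p.Prime)
    (hlucky : ∀ g ∈ Gt, ¬ (p:ℤ) ∣ GB.lcoeff m g) :
    ∀ f : MvPolynomial (Fin n) ℤ, f ∈ J →
      MvPolynomial.map (Int.castRingHom (ZMod p)) f ≠ 0 →
      ∃ t ∈ Gt, GB.lexp m t ≤ GB.lexp m (MvPolynomial.map (Int.castRingHom (ZMod p)) f) := by
  suffices H : ∀ s : m.syn, ∀ f : MvPolynomial (Fin n) ℤ, m.toSyn (GB.lexp m f) = s → f ∈ J →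
      MvPolynomial.map (Int.castRingHom (ZMod p)) f ≠ 0 →
      ∃ t ∈ Gt, GB.lexp m t ≤ GB.lexp m (MvPolynomial.map (Int.castRingHom (ZMod p)) f) by
    exact fun f hfJ hπ => H _ f rfl hfJ hπ
  intro s
  induction s using WellFoundedLT.induction with
  | _ s IH =>
  rintro f rfl hfJ hπ
  have hf0 : f ≠ 0 := fun h => hπ (by rw [h]; simp)
  have hlf : GB.lcoeff m f ≠ 0 := lcoeff_ne_zero m hf0
  obtain ⟨t, ht, hdvd⟩ := hGt.2.2 _ hfJ hf0
  have ht0 : t ≠ 0 := fun h => hGt.1 (h ▸ ht)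
  have htJ : t ∈ J := hGt.2.1 ▸ Ideal.subset_span ht
  simp only [GB.LM] at hdvd
  obtain ⟨hlele, hcdvd⟩ := monomial_dvd_monomial hlf hdvd
  by_cases hpf : (p:ℤ) ∣ GB.lcoeff m f
  · obtain ⟨q, hq⟩ := hcdvd
    have hpq : (p:ℤ) ∣ q := by
      rcases (Nat.prime_iff_prime_int.mp hp).dvd_mul.mp (hq ▸ hpf) with h | h
      · exact absurd h (hlucky t ht)
      · exact h
    have hq' : q * GB.lcoeff m t = GB.lcoeff m f := by rw [hq]; ring
    have hπeq : MvPolynomial.map (Int.castRingHom (ZMod p))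
        (f - MvPolynomial.monomial (GB.lexp m f - GB.lexp m t) q * t) =
        MvPolynomial.map (Int.castRingHom (ZMod p)) f := by
      rw [map_sub, map_mul, MvPolynomial.map_monomial]
      have hq0 : (Int.castRingHom (ZMod p)) q = 0 := by
        simpa [Int.coe_castRingHom, ZMod.intCast_zmod_eq_zero_iff_dvd] using hpq
      rw [hq0]
      simp
    have hf'0 : f - MvPolynomial.monomial (GB.lexp m f - GB.lexp m t) q * t ≠ 0 := by
      intro h; apply hπ; rw [← hπeq, h]; simp
    have hf'J : f - MvPolynomial.monomial (GB.lexp m f - GB.lexp m t) q * t ∈ J :=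
      sub_mem hfJ (Ideal.mul_mem_left _ _ htJ)
    obtain ⟨t', ht', hle'⟩ :=
      IH _ (cancel_lt m hlele hq' hf'0) _ rfl hf'J (by rw [hπeq]; exact hπ)
    rw [hπeq] at hle'
    exact ⟨t', ht', hle'⟩
  · refine ⟨t, ht, ?_⟩
    have hmem : GB.lexp m f ∈ (MvPolynomial.map (Int.castRingHom (ZMod p)) f).support := by
      rw [MvPolynomial.mem_support_iff, MvPolynomial.coeff_map]
      simpa [Int.coe_castRingHom, ZMod.intCast_zmod_eq_zero_iff_dvd, GB.lcoeff] using hpf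
    have heq : GB.lexp m (MvPolynomial.map (Int.castRingHom (ZMod p)) f) = GB.lexp m f := by
      refine lexp_eq_of_max m hmem fun e he => ?_
      rw [MvPolynomial.mem_support_iff, MvPolynomial.coeff_map] at he
      have he2 : MvPolynomial.coeff e f ≠ 0 := fun h0 => he (by rw [h0]; simp)
      exact le_toSyn_lexp m (MvPolynomial.mem_support_iff.mpr he2)
    rw [heq]
    exact hlele

end Aux3

section Aux4

open GB

variable {n : ℕ} (m : MonomialOrder (Fin n))

lemma lexp_map_injective {K L : Type*} [CommSemiring K] [CommSemiring L]
    (φ : K →+* L) (hφ : Function.Injective φ) (f : MvPolynomial (Fin n) K) :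
    GB.lexp m (MvPolynomial.map φ f) = GB.lexp m f := by
  rw [GB.lexp, GB.lexp, MvPolynomial.support_map_of_injective f hφ]

lemma intScale_ne_zero {f : MvPolynomial (Fin n) ℚ} (hf : f ≠ 0) : GB.intScale f ≠ 0 := by
  obtain ⟨d, hd⟩ := MvPolynomial.support_nonempty.mpr hf
  intro h0
  have hthis := coeff_intScale f d
  rw [h0, MvPolynomial.coeff_zero, if_pos hd] at hthis
  have hne : MvPolynomial.coeff d f * ((GB.den f : ℕ) : ℚ) ≠ 0 :=
    mul_ne_zero (MvPolynomial.mem_support_iff.mp hd) (Nat.cast_ne_zero.mpr (den_ne_zero f))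
  apply hne
  have hdvd : (MvPolynomial.coeff d f).den ∣ GB.den f := Finset.dvd_lcm hd
  rw [← num_mul_natCast hdvd, ← hthis]
  simp

lemma gcd_intScale_ne_zero {f : MvPolynomial (Fin n) ℚ} (hf : f ≠ 0) :
    ((GB.intScale f).support.gcd fun e => MvPolynomial.coeff e (GB.intScale f)) ≠ 0 := by
  intro h
  apply intScale_ne_zero hf
  rw [Finset.gcd_eq_zero_iff] at h
  apply MvPolynomial.ext
  intro e
  rw [MvPolynomial.coeff_zero]
  by_cases he : e ∈ (GB.intScale f).support
  · exact h e he
  · exact MvPolynomial.notMem_support_iff.mp he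

lemma key_primQ (f : MvPolynomial (Fin n) ℚ) :
    MvPolynomial.C
        ((((GB.intScale f).support.gcd fun e => MvPolynomial.coeff e (GB.intScale f)) : ℤ) : ℚ) *
      MvPolynomial.map (Int.castRingHom ℚ) (GB.primQ f) =
      MvPolynomial.C ((GB.den f : ℕ) : ℚ) * f := by
  have h1 := congrArg (MvPolynomial.map (Int.castRingHom ℚ)) (C_gcd_mul_primQ f)
  rw [map_mul, MvPolynomial.map_C, map_intScale] at h1
  exact h1

lemma map_primQ_mem {F : Finset (MvPolynomial (Fin n) ℚ)} {f : MvPolynomial (Fin n) ℚ}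
    (hf : f ≠ 0) (hfI : f ∈ Ideal.span (F : Set (MvPolynomial (Fin n) ℚ))) :
    MvPolynomial.map (Int.castRingHom ℚ) (GB.primQ f) ∈
      Ideal.span (F : Set (MvPolynomial (Fin n) ℚ)) := by
  have hg0 : ((((GB.intScale f).support.gcd fun e =>
      MvPolynomial.coeff e (GB.intScale f)) : ℤ) : ℚ) ≠ 0 :=
    Int.cast_ne_zero.mpr (gcd_intScale_ne_zero hf)
  have heq : MvPolynomial.map (Int.castRingHom ℚ) (GB.primQ f) =
      MvPolynomial.C ((((GB.intScale f).support.gcd fun e =>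
          MvPolynomial.coeff e (GB.intScale f)) : ℤ) : ℚ)⁻¹ *
        (MvPolynomial.C ((GB.den f : ℕ) : ℚ) * f) := by
    rw [← key_primQ f, ← mul_assoc, ← MvPolynomial.C_mul, inv_mul_cancel₀ hg0,
      MvPolynomial.C_1, one_mul]
  rw [heq]
  exact Ideal.mul_mem_left _ _ (Ideal.mul_mem_left _ _ hfI)

lemma span_primQ_le {F : Finset (MvPolynomial (Fin n) ℚ)}
    (hF0 : (0 : MvPolynomial (Fin n) ℚ) ∉ F) :
    Ideal.span ((MvPolynomial.map (Int.castRingHom ℚ)) ''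
        (GB.primQ '' (F : Set (MvPolynomial (Fin n) ℚ)))) ≤
      Ideal.span (F : Set (MvPolynomial (Fin n) ℚ)) := by
  rw [Ideal.span_le]
  rintro _ ⟨_, ⟨f, hfF, rfl⟩, rfl⟩
  exact map_primQ_mem (fun h => hF0 (h ▸ hfF)) (Ideal.subset_span hfF)

lemma span_F_le {F : Finset (MvPolynomial (Fin n) ℚ)}
    (hF0 : (0 : MvPolynomial (Fin n) ℚ) ∉ F) :
    Ideal.span (F : Set (MvPolynomial (Fin n) ℚ)) ≤
      Ideal.span ((MvPolynomial.map (Int.castRingHom ℚ)) ''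
        (GB.primQ '' (F : Set (MvPolynomial (Fin n) ℚ)))) := by
  rw [Ideal.span_le]
  intro f hf
  have hf0 : f ≠ 0 := fun h => hF0 (h ▸ hf)
  have hd0 : ((GB.den f : ℕ) : ℚ) ≠ 0 := Nat.cast_ne_zero.mpr (den_ne_zero f)
  have heq : f = MvPolynomial.C (((GB.den f : ℕ) : ℚ)⁻¹ *
      ((((GB.intScale f).support.gcd fun e =>
        MvPolynomial.coeff e (GB.intScale f)) : ℤ) : ℚ)) *
      MvPolynomial.map (Int.castRingHom ℚ) (GB.primQ f) := by
    rw [MvPolynomial.C_mul, mul_assoc, key_primQ f, ← mul_assoc, ← MvPolynomial.C_mul,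
      inv_mul_cancel₀ hd0, MvPolynomial.C_1, one_mul]
  rw [heq]
  exact Ideal.mul_mem_left _ _ (Ideal.subset_span ⟨_, ⟨f, hf, rfl⟩, rfl⟩)

lemma clearDen (SZ : Finset (MvPolynomial (Fin n) ℤ)) (w : MvPolynomial (Fin n) ℤ)
    (hw : MvPolynomial.map (Int.castRingHom ℚ) w ∈
      Ideal.span ((MvPolynomial.map (Int.castRingHom ℚ)) ''
        (SZ : Set (MvPolynomial (Fin n) ℤ)))) :
    ∃ M : ℤ, M ≠ 0 ∧ MvPolynomial.C M * w ∈
      Ideal.span (SZ : Set (MvPolynomial (Fin n) ℤ)) := by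
  rw [← Finset.coe_image, ← Ideal.submodule_span_eq] at hw
  obtain ⟨a, -, ha⟩ := Submodule.mem_span_finset.mp hw
  have hinj : Function.Injective
      (MvPolynomial.map (Int.castRingHom ℚ) :
        MvPolynomial (Fin n) ℤ → MvPolynomial (Fin n) ℚ) :=
    MvPolynomial.map_injective (Int.castRingHom ℚ) fun a b h => Int.cast_injective h
  have hsum : ∑ s ∈ SZ, a (MvPolynomial.map (Int.castRingHom ℚ) s) •
      MvPolynomial.map (Int.castRingHom ℚ) s = MvPolynomial.map (Int.castRingHom ℚ) w := by
    rw [← ha]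
    exact (Finset.sum_image (f := fun i => a i • i) fun x _ y _ h => hinj h).symm
  refine ⟨∏ s ∈ SZ, ((GB.den (a (MvPolynomial.map (Int.castRingHom ℚ) s)) : ℕ) : ℤ), ?_, ?_⟩
  · rw [Finset.prod_ne_zero_iff]
    exact fun s _ => Int.natCast_ne_zero.mpr (den_ne_zero _)
  · have hkey : MvPolynomial.C
        (∏ s ∈ SZ, ((GB.den (a (MvPolynomial.map (Int.castRingHom ℚ) s)) : ℕ) : ℤ)) * w =
        ∑ s ∈ SZ, MvPolynomial.C (∏ x ∈ SZ.erase s,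
            ((GB.den (a (MvPolynomial.map (Int.castRingHom ℚ) x)) : ℕ) : ℤ)) *
          GB.intScale (a (MvPolynomial.map (Int.castRingHom ℚ) s)) * s := by
      apply hinj
      rw [map_mul, map_sum, MvPolynomial.map_C, ← hsum, Finset.mul_sum]
      refine Finset.sum_congr rfl fun s hs => ?_
      rw [map_mul, map_mul, MvPolynomial.map_C, map_intScale, smul_eq_mul]
      have hC : (Int.castRingHom ℚ)
          (∏ s ∈ SZ, ((GB.den (a (MvPolynomial.map (Int.castRingHom ℚ) s)) : ℕ) : ℤ)) =
          (Int.castRingHom ℚ) (∏ x ∈ SZ.erase s,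
            ((GB.den (a (MvPolynomial.map (Int.castRingHom ℚ) x)) : ℕ) : ℤ)) *
          ((GB.den (a (MvPolynomial.map (Int.castRingHom ℚ) s)) : ℕ) : ℚ) := by
        simp only [Int.coe_castRingHom]
        rw [← Finset.mul_prod_erase SZ
          (fun x => ((GB.den (a (MvPolynomial.map (Int.castRingHom ℚ) x)) : ℕ) : ℤ)) hs]
        push_cast
        ring
      rw [hC, MvPolynomial.C_mul]
      ring
    rw [hkey]
    exact Ideal.sum_mem _ fun s hs => Ideal.mul_mem_left _ _ (Ideal.subset_span hs)

end Aux4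

/-- if `p` is σ-Pauer-lucky for `prim(F)` then `p` is σ-good for `⟨F⟩`. -/
theorem stmt14 {n : ℕ} (m : MonomialOrder (Fin n))
    (F : Finset (MvPolynomial (Fin n) ℚ)) (hF0 : (0 : MvPolynomial (Fin n) ℚ) ∉ F)
    (G : Finset (MvPolynomial (Fin n) ℚ))
    (hG : GB.IsReducedGB m G (Ideal.span (F : Set (MvPolynomial (Fin n) ℚ))))
    (Gt : Finset (MvPolynomial (Fin n) ℤ))
    (hGt : GB.IsMinStrongGB m Gt
      (Ideal.span (GB.primQ '' (F : Set (MvPolynomial (Fin n) ℚ)))))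
    (p : ℕ) (hp : p.Prime)
    (hlucky : ∀ g ∈ Gt, ¬ (p : ℤ) ∣ GB.lcoeff m g) :
    ¬ p ∣ GB.denF G := by
  intro hpd
  rw [GB.denF] at hpd
  obtain ⟨g₀, hg₀G, hpden⟩ := prime_dvd_lcm hp G GB.den hpd
  obtain ⟨⟨hG0, hGsub, hGspan, hGdiv⟩, hGlc, hGred⟩ := hG
  have hg₀0 : g₀ ≠ 0 := fun h => hG0 (h ▸ hg₀G)
  have hSG : GB.IsStrongGB m Gt
      (Ideal.span ((F.image GB.primQ : Finset (MvPolynomial (Fin n) ℤ)) :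
        Set (MvPolynomial (Fin n) ℤ))) := by
    have h1 := hGt.1
    rwa [show (GB.primQ '' (F : Set (MvPolynomial (Fin n) ℚ))) =
      ((F.image GB.primQ : Finset (MvPolynomial (Fin n) ℤ)) :
        Set (MvPolynomial (Fin n) ℤ)) from (Finset.coe_image).symm] at h1
  -- Step 1: the image of intScale g₀ lies in the span of the images of the primitive parts
  have h1 : MvPolynomial.map (Int.castRingHom ℚ) (GB.intScale g₀) ∈
      Ideal.span ((MvPolynomial.map (Int.castRingHom ℚ)) ''
        (GB.primQ '' (F : Set (MvPolynomial (Fin n) ℚ)))) := by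
    rw [map_intScale]
    exact span_F_le hF0 (Ideal.mul_mem_left _ _ (hGsub hg₀G))
  rw [show (GB.primQ '' (F : Set (MvPolynomial (Fin n) ℚ))) =
      ((F.image GB.primQ : Finset (MvPolynomial (Fin n) ℤ)) :
        Set (MvPolynomial (Fin n) ℤ)) from (Finset.coe_image).symm] at h1
  -- Step 2: clear denominators
  obtain ⟨M, hM0, hMJ⟩ := clearDen (F.image GB.primQ) (GB.intScale g₀) h1
  -- Step 3: find a p-coprime multiple of intScale g₀ in the ℤ-ideal
  obtain ⟨u, hu, huJ⟩ := mainLem m hSG hp hlucky (GB.intScale g₀) ⟨M, hM0, hMJ⟩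
  -- Step 4: a coefficient of intScale g₀ coprime to p
  obtain ⟨d₀, hd₀, hd₀p⟩ := exists_coprime_coeff hp g₀ hpden
  -- Step 5: the reduction mod p is nonzero
  have hcoeffd : ∀ e, MvPolynomial.coeff e
      (MvPolynomial.map (Int.castRingHom (ZMod p)) (MvPolynomial.C u * GB.intScale g₀)) =
      (((u * MvPolynomial.coeff e (GB.intScale g₀) : ℤ) : ZMod p)) := by
    intro e
    rw [MvPolynomial.coeff_map, MvPolynomial.coeff_C_mul]
    simp [Int.coe_castRingHom]
  have hπ0 : MvPolynomial.map (Int.castRingHom (ZMod p))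
      (MvPolynomial.C u * GB.intScale g₀) ≠ 0 := by
    intro h
    have hc := congrArg (MvPolynomial.coeff d₀) h
    rw [hcoeffd, MvPolynomial.coeff_zero, ZMod.intCast_zmod_eq_zero_iff_dvd] at hc
    rcases (Nat.prime_iff_prime_int.mp hp).dvd_mul.mp hc with h' | h'
    · exact hu h'
    · exact hd₀p h'
  -- Step 6: apply claim B
  obtain ⟨t, htGt, htle⟩ := claimB m hSG hp hlucky _ huJ hπ0
  -- Step 7: properties of the leading exponent of the reduction
  have hdmem := lexp_mem m hπ0
  have hdsup : GB.lexp m (MvPolynomial.map (Int.castRingHom (ZMod p))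
      (MvPolynomial.C u * GB.intScale g₀)) ∈ g₀.support := by
    have h2 := MvPolynomial.mem_support_iff.mp hdmem
    rw [hcoeffd] at h2
    by_contra hns
    have h3 : MvPolynomial.coeff (GB.lexp m (MvPolynomial.map (Int.castRingHom (ZMod p))
        (MvPolynomial.C u * GB.intScale g₀))) (GB.intScale g₀) = 0 := by
      rw [coeff_intScale, if_neg hns]
    rw [h3, mul_zero] at h2
    exact h2 (by simp)
  have hlex0 : MvPolynomial.coeff (GB.lexp m g₀) (GB.intScale g₀) = ((GB.den g₀ : ℕ) : ℤ) := by
    rw [coeff_intScale, if_pos (lexp_mem m hg₀0)]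
    have hone : MvPolynomial.coeff (GB.lexp m g₀) g₀ = 1 := hGlc g₀ hg₀G
    rw [hone, one_mul]
    simp
  have hdne : GB.lexp m (MvPolynomial.map (Int.castRingHom (ZMod p))
      (MvPolynomial.C u * GB.intScale g₀)) ≠ GB.lexp m g₀ := by
    intro he
    have h2 := MvPolynomial.mem_support_iff.mp hdmem
    rw [hcoeffd, he, hlex0] at h2
    apply h2
    rw [ZMod.intCast_zmod_eq_zero_iff_dvd]
    exact Dvd.dvd.mul_left (Int.natCast_dvd_natCast.mpr hpden) u
  -- Step 8: map t to ℚ and use the Gröbner basis property of G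
  have ht0 : t ≠ 0 := fun h => hSG.1 (h ▸ htGt)
  have htJ : t ∈ Ideal.span (GB.primQ '' (F : Set (MvPolynomial (Fin n) ℚ))) :=
    hGt.1.2.1 ▸ Ideal.subset_span htGt
  have hφtI : MvPolynomial.map (Int.castRingHom ℚ) t ∈
      Ideal.span (F : Set (MvPolynomial (Fin n) ℚ)) := by
    apply span_primQ_le hF0
    have h4 := Ideal.mem_map_of_mem
      (MvPolynomial.map (Int.castRingHom ℚ) :
        MvPolynomial (Fin n) ℤ →+* MvPolynomial (Fin n) ℚ) htJ
    rwa [Ideal.map_span] at h4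
  have hφt0 : MvPolynomial.map (Int.castRingHom ℚ) t ≠ 0 := by
    intro h
    apply ht0
    have hinj : Function.Injective
        (MvPolynomial.map (Int.castRingHom ℚ) :
          MvPolynomial (Fin n) ℤ → MvPolynomial (Fin n) ℚ) :=
      MvPolynomial.map_injective (Int.castRingHom ℚ) fun a b hab => Int.cast_injective hab
    apply hinj
    rw [h, map_zero]
  obtain ⟨g', hg'G, hg'le⟩ := hGdiv _ hφtI hφt0
  rw [lexp_map_injective m (Int.castRingHom ℚ)
    (fun a b hab => Int.cast_injective hab) t] at hg'le
  have hchain : GB.lexp m g' ≤ GB.lexp m (MvPolynomial.map (Int.castRingHom (ZMod p))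
      (MvPolynomial.C u * GB.intScale g₀)) := le_trans hg'le htle
  -- Step 9: g' ≠ g₀
  have hg'ne : g' ≠ g₀ := by
    intro he
    subst he
    apply hdne
    apply m.toSyn.injective
    apply le_antisymm
    · exact le_toSyn_lexp m hdsup
    · exact m.toSyn_monotone hchain
  -- Step 10: contradiction with reducedness
  exact hGred g₀ hg₀G _ hdsup g' hg'G hg'ne hchain
end

section
/- Let P = Q[x_1,...,x_n], let σ and τ be term orderings, I a nonzero ideal in P, and p a prime that is σ-good for I. If p is also τ-good for I, then O_τ(I_{(p,σ)}) = O_τ(I), where I_{(p,σ)} = ⟨π_p(G_σ)⟩ ⊆ F_p[x_1,...,x_n]. -/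
open MvPolynomial
open scoped Classical

namespace GB

section Aux

variable {n : ℕ} {p : ℕ} [Fact p.Prime]

/-- All coefficient denominators are prime to `p`. -/
def Good (p : ℕ) {n : ℕ} (f : MvPolynomial (Fin n) ℚ) : Prop :=
  ∀ d, ¬ p ∣ (MvPolynomial.coeff d f).den

lemma gq_one : ¬ p ∣ 1 :=
  fun h => (Fact.out : p.Prime).ne_one (Nat.dvd_one.mp h)

lemma gq_zero : ¬ p ∣ (0 : ℚ).den := by
  simpa using gq_one

lemma gq_add {a b : ℚ} (ha : ¬ p ∣ a.den) (hb : ¬ p ∣ b.den) : ¬ p ∣ (a + b).den :=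
  fun h => (((Fact.out : p.Prime).dvd_mul.mp (h.trans (Rat.add_den_dvd a b))).elim ha hb)

lemma gq_mul {a b : ℚ} (ha : ¬ p ∣ a.den) (hb : ¬ p ∣ b.den) : ¬ p ∣ (a * b).den :=
  fun h => (((Fact.out : p.Prime).dvd_mul.mp (h.trans (Rat.mul_den_dvd a b))).elim ha hb)

lemma gq_neg {a : ℚ} (ha : ¬ p ∣ a.den) : ¬ p ∣ (-a).den := by
  rwa [Rat.den_neg_eq_den]

lemma denNe {a : ℚ} (ha : ¬ p ∣ a.den) : ((a.den : ZMod p)) ≠ 0 := by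
  rwa [Ne, ZMod.natCast_eq_zero_iff]

lemma castQ_add {a b : ℚ} (ha : ¬ p ∣ a.den) (hb : ¬ p ∣ b.den) :
    ((a + b : ℚ) : ZMod p) = (a : ZMod p) + (b : ZMod p) :=
  Rat.cast_add_of_ne_zero (denNe ha) (denNe hb)

lemma castQ_mul {a b : ℚ} (ha : ¬ p ∣ a.den) (hb : ¬ p ∣ b.den) :
    ((a * b : ℚ) : ZMod p) = (a : ZMod p) * (b : ZMod p) :=
  Rat.cast_mul_of_ne_zero (denNe ha) (denNe hb)

lemma gq_sum {α : Type*} {s : Finset α} {F : α → ℚ} (h : ∀ i ∈ s, ¬ p ∣ (F i).den) :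
    ¬ p ∣ (∑ i ∈ s, F i).den := by
  classical
  induction s using Finset.induction with
  | empty => simpa using gq_zero
  | insert _ _ hx ih =>
    rw [Finset.sum_insert hx]
    exact gq_add (h _ (Finset.mem_insert_self _ _))
      (ih fun i hi => h i (Finset.mem_insert_of_mem hi))

lemma castQ_sum {α : Type*} {s : Finset α} {F : α → ℚ} (h : ∀ i ∈ s, ¬ p ∣ (F i).den) :
    ((∑ i ∈ s, F i : ℚ) : ZMod p) = ∑ i ∈ s, ((F i : ℚ) : ZMod p) := by
  classical
  induction s using Finset.induction with
  | empty => simp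
  | insert _ _ hx ih =>
    rw [Finset.sum_insert hx, Finset.sum_insert hx,
      castQ_add (h _ (Finset.mem_insert_self _ _))
        (gq_sum fun i hi => h i (Finset.mem_insert_of_mem hi)),
      ih fun i hi => h i (Finset.mem_insert_of_mem hi)]

lemma redQ_eq (a : ℚ) : redQ p a = (a : ZMod p) := by
  rw [redQ, Rat.cast_def, div_eq_mul_inv]

lemma coeff_piP (f : MvPolynomial (Fin n) ℚ) (d : Fin n →₀ ℕ) :
    MvPolynomial.coeff d (piP p f) = ((MvPolynomial.coeff d f : ℚ) : ZMod p) := by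
  classical
  rw [piP, MvPolynomial.coeff_sum]
  simp only [MvPolynomial.coeff_monomial, redQ_eq]
  rw [Finset.sum_ite_eq' f.support d]
  split_ifs with hd
  · rfl
  · rw [MvPolynomial.notMem_support_iff.mp hd, Rat.cast_zero]

lemma piP_zero : piP p (0 : MvPolynomial (Fin n) ℚ) = 0 := by
  ext d
  rw [coeff_piP]
  simp

lemma piP_add {f g : MvPolynomial (Fin n) ℚ} (hf : Good p f) (hg : Good p g) :
    piP p (f + g) = piP p f + piP p g := by
  ext d
  rw [MvPolynomial.coeff_add, coeff_piP, coeff_piP, coeff_piP, MvPolynomial.coeff_add,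
    castQ_add (hf d) (hg d)]

lemma piP_neg {f : MvPolynomial (Fin n) ℚ} : piP p (-f) = -piP p f := by
  ext d
  rw [MvPolynomial.coeff_neg, coeff_piP, coeff_piP, MvPolynomial.coeff_neg, Rat.cast_neg]

lemma piP_sub {f g : MvPolynomial (Fin n) ℚ} (hf : Good p f) (hg : Good p g) :
    piP p (f - g) = piP p f - piP p g := by
  rw [sub_eq_add_neg, sub_eq_add_neg, piP_add hf (fun d => by
    rw [MvPolynomial.coeff_neg]; exact gq_neg (hg d)), piP_neg]

lemma piP_mul {f g : MvPolynomial (Fin n) ℚ} (hf : Good p f) (hg : Good p g) :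
    piP p (f * g) = piP p f * piP p g := by
  classical
  ext d
  rw [coeff_piP, MvPolynomial.coeff_mul, MvPolynomial.coeff_mul,
    castQ_sum fun x _ => gq_mul (hf x.1) (hg x.2)]
  exact Finset.sum_congr rfl fun x _ => by
    rw [castQ_mul (hf x.1) (hg x.2), coeff_piP, coeff_piP]

lemma piP_monomial (e : Fin n →₀ ℕ) (c : ℚ) :
    piP p (monomial e c) = monomial e ((c : ZMod p)) := by
  ext d
  rw [coeff_piP, MvPolynomial.coeff_monomial, MvPolynomial.coeff_monomial]
  split_ifs
  · rfl
  · exact Rat.cast_zero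

lemma good_zero : Good p (0 : MvPolynomial (Fin n) ℚ) := fun d => by
  rw [MvPolynomial.coeff_zero]; exact gq_zero

lemma good_add {f g : MvPolynomial (Fin n) ℚ} (hf : Good p f) (hg : Good p g) :
    Good p (f + g) := fun d => by
  rw [MvPolynomial.coeff_add]; exact gq_add (hf d) (hg d)

lemma good_mul {f g : MvPolynomial (Fin n) ℚ} (hf : Good p f) (hg : Good p g) :
    Good p (f * g) := fun d => by
  classical
  rw [MvPolynomial.coeff_mul]
  exact gq_sum fun x _ => gq_mul (hf x.1) (hg x.2)

lemma good_sub {f g : MvPolynomial (Fin n) ℚ} (hf : Good p f) (hg : Good p g) :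
    Good p (f - g) := by
  rw [sub_eq_add_neg]
  exact good_add hf fun d => by rw [MvPolynomial.coeff_neg]; exact gq_neg (hg d)

lemma good_monomial {e : Fin n →₀ ℕ} {c : ℚ} (hc : ¬ p ∣ c.den) :
    Good p (monomial e c) := fun d => by
  rw [MvPolynomial.coeff_monomial]
  split_ifs
  · exact hc
  · exact gq_zero

lemma goodF {G : Finset (MvPolynomial (Fin n) ℚ)} (hpG : ¬ p ∣ denF G) :
    ∀ g ∈ G, Good p g := by
  intro g hg d
  by_cases hd : d ∈ g.support
  · intro hdvd
    have d1 : (MvPolynomial.coeff d g).den ∣ den g := Finset.dvd_lcm hd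
    have d2 : den g ∣ denF G := Finset.dvd_lcm hg
    exact hpG (hdvd.trans (d1.trans d2))
  · rw [MvPolynomial.notMem_support_iff.mp hd]
    exact gq_zero

/-! lexp lemmas -/

lemma toSyn_lexp {K : Type*} [CommSemiring K] (m : MonomialOrder (Fin n))
    (f : MvPolynomial (Fin n) K) :
    m.toSyn (lexp m f) = f.support.sup fun d => m.toSyn d :=
  m.toSyn.apply_symm_apply _

lemma lexp_mem_support {K : Type*} [CommSemiring K] (m : MonomialOrder (Fin n))
    {f : MvPolynomial (Fin n) K} (hf : f ≠ 0) : lexp m f ∈ f.support := by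
  obtain ⟨b, hb, hsup⟩ := Finset.exists_mem_eq_sup f.support
    (MvPolynomial.support_nonempty.mpr hf) fun d => m.toSyn d
  rw [lexp, hsup, AddEquiv.symm_apply_apply]
  exact hb

lemma le_lexp {K : Type*} [CommSemiring K] (m : MonomialOrder (Fin n))
    {f : MvPolynomial (Fin n) K} {d : Fin n →₀ ℕ} (hd : d ∈ f.support) :
    m.toSyn d ≤ m.toSyn (lexp m f) := by
  rw [toSyn_lexp]
  exact Finset.le_sup hd

lemma lexp_lt_of {K : Type*} [CommSemiring K] (m : MonomialOrder (Fin n))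
    {F' : MvPolynomial (Fin n) K} {s : m.syn}
    (h : ∀ d ∈ F'.support, m.toSyn d < s) : F' = 0 ∨ m.toSyn (lexp m F') < s := by
  by_cases h0 : F' = 0
  · exact Or.inl h0
  · exact Or.inr (h _ (lexp_mem_support m h0))

lemma lexp_piP {m : MonomialOrder (Fin n)} {f : MvPolynomial (Fin n) ℚ}
    (h : ((lcoeff m f : ℚ) : ZMod p) ≠ 0) :
    lexp m (piP p f) = lexp m f := by
  have hmem : lexp m f ∈ (piP p f).support := by
    rw [MvPolynomial.mem_support_iff, coeff_piP]
    exact h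
  apply m.toSyn.injective
  apply le_antisymm
  · rw [toSyn_lexp, toSyn_lexp]
    apply Finset.sup_mono
    intro d hd
    rw [MvPolynomial.mem_support_iff] at hd ⊢
    intro h0
    apply hd
    rw [coeff_piP, h0, Rat.cast_zero]
  · exact le_lexp m hmem

lemma step_lt (m : MonomialOrder (Fin n)) {K : Type*} [CommRing K]
    {F g : MvPolynomial (Fin n) K} {e : Fin n →₀ ℕ} {c : K}
    (hsum : e + lexp m g = lexp m F) (hcg : c * lcoeff m g = lcoeff m F) :
    F - monomial e c * g = 0 ∨
      m.toSyn (lexp m (F - monomial e c * g)) < m.toSyn (lexp m F) := by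
  classical
  refine lexp_lt_of m ?_
  intro d hd
  have hd0 : MvPolynomial.coeff d (F - monomial e c * g) ≠ 0 :=
    MvPolynomial.mem_support_iff.mp hd
  have hcoeff : MvPolynomial.coeff (lexp m F) (monomial e c * g) = lcoeff m F := by
    rw [← hsum, MvPolynomial.coeff_monomial_mul]
    exact hcg
  have hdne : d ≠ lexp m F := by
    rintro rfl
    apply hd0
    rw [MvPolynomial.coeff_sub, hcoeff]
    exact sub_self _
  refine lt_of_le_of_ne ?_ fun hh => hdne (m.toSyn.injective hh)
  have hcase : MvPolynomial.coeff d F ≠ 0 ∨ MvPolynomial.coeff d (monomial e c * g) ≠ 0 := by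
    by_contra hcon
    push_neg at hcon
    apply hd0
    rw [MvPolynomial.coeff_sub, hcon.1, hcon.2, sub_zero]
  rcases hcase with h | h
  · exact le_lexp m (MvPolynomial.mem_support_iff.mpr h)
  · have hd' := MvPolynomial.support_mul _ _ (MvPolynomial.mem_support_iff.mpr h)
    obtain ⟨d1, hd1, d2, hd2, rfl⟩ := Finset.mem_add.mp hd'
    have hd1e : d1 = e := Finset.mem_singleton.mp (MvPolynomial.support_monomial_subset hd1)
    calc m.toSyn (d1 + d2) = m.toSyn d1 + m.toSyn d2 := map_add _ _ _
      _ ≤ m.toSyn e + m.toSyn (lexp m g) := by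
          rw [hd1e]; exact add_le_add_right (le_lexp m hd2) _
      _ = m.toSyn (e + lexp m g) := (map_add _ _ _).symm
      _ = m.toSyn (lexp m F) := by rw [hsum]

lemma piP_mem (mσ : MonomialOrder (Fin n)) {I : Ideal (MvPolynomial (Fin n) ℚ)}
    {Gσ : Finset (MvPolynomial (Fin n) ℚ)} (hGσ : IsReducedGB mσ Gσ I)
    (hpσ : ¬ p ∣ denF Gσ) :
    ∀ F ∈ I, Good p F → piP p F ∈ Ideal.span
      ((Gσ.image (piP p) : Finset (MvPolynomial (Fin n) (ZMod p))) :
        Set (MvPolynomial (Fin n) (ZMod p))) := by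
  classical
  set J := Ideal.span ((Gσ.image (piP p) : Finset (MvPolynomial (Fin n) (ZMod p))) :
    Set (MvPolynomial (Fin n) (ZMod p))) with hJdef
  have wf : WellFounded ((· < ·) : mσ.syn → mσ.syn → Prop) := IsWellFounded.wf
  have main : ∀ s : mσ.syn, ∀ F, F ∈ I → Good p F → mσ.toSyn (lexp mσ F) = s →
      piP p F ∈ J := by
    intro s
    refine wf.induction (C := fun s => ∀ F, F ∈ I → Good p F →
      mσ.toSyn (lexp mσ F) = s → piP p F ∈ J) s ?_
    intro t ih F hFI hFG hgen
    by_cases hF0 : F = 0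
    · rw [hF0, piP_zero]
      exact J.zero_mem
    obtain ⟨g, hgG, hgle⟩ := hGσ.1.2.2.2 F hFI hF0
    have hgI : g ∈ I := hGσ.1.2.1 hgG
    have hg1 : lcoeff mσ g = 1 := hGσ.2.1 g hgG
    have hgGood : Good p g := goodF hpσ g hgG
    have hsum : (lexp mσ F - lexp mσ g) + lexp mσ g = lexp mσ F := tsub_add_cancel_of_le hgle
    have hmonGood : Good p (monomial (lexp mσ F - lexp mσ g) (lcoeff mσ F)) :=
      good_monomial (hFG _)
    have htGood := good_mul hmonGood hgGood
    have hF'Good := good_sub hFG htGood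
    have hdec : piP p F = piP p (F - monomial (lexp mσ F - lexp mσ g) (lcoeff mσ F) * g) +
        piP p (monomial (lexp mσ F - lexp mσ g) (lcoeff mσ F) * g) := by
      rw [← piP_add hF'Good htGood, sub_add_cancel]
    have htJ : piP p (monomial (lexp mσ F - lexp mσ g) (lcoeff mσ F) * g) ∈ J := by
      rw [piP_mul hmonGood hgGood, piP_monomial]
      refine Ideal.mul_mem_left _ _ (Ideal.subset_span ?_)
      simp only [Finset.coe_image, Set.mem_image, Finset.mem_coe]
      exact ⟨g, hgG, rfl⟩
    rcases step_lt mσ hsum (by rw [hg1, mul_one]) with h0 | hlt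
    · rw [hdec, h0, piP_zero, zero_add]
      exact htJ
    · rw [hdec]
      exact J.add_mem (ih _ (hgen ▸ hlt) _
        (I.sub_mem hFI (I.mul_mem_left _ hgI)) hF'Good rfl) htJ
  exact fun F hFI hFG => main _ F hFI hFG rfl

lemma goodInt (Q : MvPolynomial (Fin n) ℤ) :
    Good p (MvPolynomial.map (Int.castRingHom ℚ) Q) := fun d => by
  rw [MvPolynomial.coeff_map]
  simp only [eq_intCast, Rat.den_intCast]
  exact gq_one

lemma piP_mapInt (Q : MvPolynomial (Fin n) ℤ) :
    piP p (MvPolynomial.map (Int.castRingHom ℚ) Q) =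
      MvPolynomial.map (Int.castRingHom (ZMod p)) Q := by
  ext d
  rw [coeff_piP, MvPolynomial.coeff_map, MvPolynomial.coeff_map]
  simp only [eq_intCast, Rat.cast_intCast]

lemma exists_preimage (mσ : MonomialOrder (Fin n)) {I : Ideal (MvPolynomial (Fin n) ℚ)}
    {Gσ : Finset (MvPolynomial (Fin n) ℚ)} (hGσ : IsReducedGB mσ Gσ I)
    (hpσ : ¬ p ∣ denF Gσ) :
    ∀ h ∈ Ideal.span ((Gσ.image (piP p) : Finset (MvPolynomial (Fin n) (ZMod p))) :
      Set (MvPolynomial (Fin n) (ZMod p))),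
      ∃ F, F ∈ I ∧ Good p F ∧ piP p F = h := by
  intro h hh
  refine Submodule.span_induction ?_ ?_ ?_ ?_ hh
  · intro x hx
    obtain ⟨g, hg, rfl⟩ := Finset.mem_image.mp (Finset.mem_coe.mp hx)
    exact ⟨g, hGσ.1.2.1 hg, goodF hpσ g hg, rfl⟩
  · exact ⟨0, I.zero_mem, good_zero, piP_zero⟩
  · rintro x y hx hy ⟨F1, hF1, hG1, rfl⟩ ⟨F2, hF2, hG2, rfl⟩
    exact ⟨F1 + F2, I.add_mem hF1 hF2, good_add hG1 hG2, piP_add hG1 hG2⟩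
  · rintro a x hx ⟨F, hF, hG, rfl⟩
    obtain ⟨Q, rfl⟩ := MvPolynomial.map_surjective (Int.castRingHom (ZMod p))
      ZMod.intCast_surjective a
    refine ⟨MvPolynomial.map (Int.castRingHom ℚ) Q * F, I.mul_mem_left _ hF,
      good_mul (goodInt Q) hG, ?_⟩
    rw [piP_mul (goodInt Q) hG, piP_mapInt, smul_eq_mul]

lemma exists_lexp_eq (mτ : MonomialOrder (Fin n)) {I : Ideal (MvPolynomial (Fin n) ℚ)}
    {Gτ : Finset (MvPolynomial (Fin n) ℚ)} (hGτ : IsReducedGB mτ Gτ I)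
    (hpτ : ¬ p ∣ denF Gτ) :
    ∀ F, F ∈ I → Good p F → piP p F ≠ 0 →
      ∃ f, f ∈ I ∧ f ≠ 0 ∧ lexp mτ f = lexp mτ (piP p F) := by
  classical
  have wf : WellFounded ((· < ·) : mτ.syn → mτ.syn → Prop) := IsWellFounded.wf
  have main : ∀ s : mτ.syn, ∀ F, F ∈ I → Good p F → piP p F ≠ 0 →
      mτ.toSyn (lexp mτ F) = s → ∃ f, f ∈ I ∧ f ≠ 0 ∧ lexp mτ f = lexp mτ (piP p F) := by
    intro s
    refine wf.induction (C := fun s => ∀ F, F ∈ I → Good p F → piP p F ≠ 0 →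
      mτ.toSyn (lexp mτ F) = s →
      ∃ f, f ∈ I ∧ f ≠ 0 ∧ lexp mτ f = lexp mτ (piP p F)) s ?_
    intro t ih F hFI hFG hFne hgen
    have hF0 : F ≠ 0 := fun h => hFne (by rw [h, piP_zero])
    by_cases hc : ((lcoeff mτ F : ℚ) : ZMod p) = 0
    · obtain ⟨g, hgG, hgle⟩ := hGτ.1.2.2.2 F hFI hF0
      have hg1 : lcoeff mτ g = 1 := hGτ.2.1 g hgG
      have hgGood : Good p g := goodF hpτ g hgG
      have hsum : (lexp mτ F - lexp mτ g) + lexp mτ g = lexp mτ F := tsub_add_cancel_of_le hgle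
      have hmonGood : Good p (monomial (lexp mτ F - lexp mτ g) (lcoeff mτ F)) :=
        good_monomial (hFG _)
      have htGood := good_mul hmonGood hgGood
      have hF'Good := good_sub hFG htGood
      have hpiP : piP p (F - monomial (lexp mτ F - lexp mτ g) (lcoeff mτ F) * g) = piP p F := by
        rw [piP_sub hFG htGood, piP_mul hmonGood hgGood, piP_monomial, hc,
          MvPolynomial.monomial_zero, zero_mul, sub_zero]
      have hne' : piP p (F - monomial (lexp mτ F - lexp mτ g) (lcoeff mτ F) * g) ≠ 0 := by
        rw [hpiP]; exact hFne
      have hF'0 : F - monomial (lexp mτ F - lexp mτ g) (lcoeff mτ F) * g ≠ 0 :=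
        fun h => hne' (by rw [h, piP_zero])
      rcases step_lt mτ hsum (by rw [hg1, mul_one]) with h0 | hlt
      · exact absurd h0 hF'0
      · obtain ⟨f, hfI, hf0, hfe⟩ := ih _ (hgen ▸ hlt) _
          (I.sub_mem hFI (I.mul_mem_left _ (hGτ.1.2.1 hgG))) hF'Good hne' rfl
        exact ⟨f, hfI, hf0, by rw [hfe, hpiP]⟩
    · exact ⟨F, hFI, hF0, (lexp_piP hc).symm⟩
  exact fun F hFI hFG hne => main _ F hFI hFG hne rfl

/-! list and minGenSet lemmas -/

lemma sord_ext (m : MonomialOrder (Fin n)) (L : List (Fin n →₀ ℕ)) :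
    ∀ L', SOrd m L → SOrd m L' → (∀ d, d ∈ L ↔ d ∈ L') → L = L' := by
  induction L with
  | nil =>
    intro L' _ _ h
    cases L' with
    | nil => rfl
    | cons b t' => exact absurd ((h b).mpr (List.mem_cons_self)) List.not_mem_nil
  | cons a t ih =>
    intro L' hL hL' h
    cases L' with
    | nil => exact absurd ((h a).mp (List.mem_cons_self)) List.not_mem_nil
    | cons b t' =>
      have hL1 := List.pairwise_cons.mp hL
      have hL'1 := List.pairwise_cons.mp hL'
      have hab : a = b := by
        rcases List.mem_cons.mp ((h a).mp (List.mem_cons_self)) with h1 | h1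
        · exact h1
        · rcases List.mem_cons.mp ((h b).mpr (List.mem_cons_self)) with h2 | h2
          · exact h2.symm
          · exact absurd (hL1.1 b h2) (not_lt.mpr (hL'1.1 a h1).le)
      subst hab
      have ht : ∀ d, d ∈ t ↔ d ∈ t' := by
        intro d
        constructor
        · intro hd
          rcases List.mem_cons.mp ((h d).mp (List.mem_cons_of_mem a hd)) with h1 | h1
          · exact absurd (h1 ▸ hL1.1 d hd) (lt_irrefl _)
          · exact h1
        · intro hd
          rcases List.mem_cons.mp ((h d).mpr (List.mem_cons_of_mem a hd)) with h1 | h1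
          · exact absurd (h1 ▸ hL'1.1 d hd) (lt_irrefl _)
          · exact h1
      rw [ih t' hL1.2 hL'1.2 ht]

lemma minGenSet_sub {K K' : Type*} [Field K] [Field K'] (m : MonomialOrder (Fin n))
    {I : Ideal (MvPolynomial (Fin n) K)} {J : Ideal (MvPolynomial (Fin n) K')}
    (h1 : ∀ f ∈ I, f ≠ 0 → ∃ h ∈ J, h ≠ 0 ∧ lexp m h ≤ lexp m f)
    (h2 : ∀ h ∈ J, h ≠ 0 → ∃ f ∈ I, f ≠ 0 ∧ lexp m f ≤ lexp m h)
    {d : Fin n →₀ ℕ} (hd : d ∈ minGenSet m I) : d ∈ minGenSet m J := by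
  obtain ⟨⟨f0, hf0I, hf0ne, hf0d⟩, hmin⟩ := hd
  obtain ⟨h, hJ, hne, hle⟩ := h1 f0 hf0I hf0ne
  rw [hf0d] at hle
  obtain ⟨f1, hf1I, hf1ne, hle1⟩ := h2 h hJ hne
  have e1 : lexp m f1 = d := hmin f1 hf1I hf1ne (le_trans hle1 hle)
  have e2 : lexp m h = d := le_antisymm hle (e1 ▸ hle1)
  refine ⟨⟨h, hJ, hne, e2⟩, ?_⟩
  intro h' hh'J hh'ne hh'le
  obtain ⟨f', hf'I, hf'ne, hle'⟩ := h2 h' hh'J hh'ne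
  have e3 : lexp m f' = d := hmin f' hf'I hf'ne (hle'.trans hh'le)
  exact le_antisymm hh'le (e3 ▸ hle')

end Aux

end GB


/-- if `p` is σ-good and τ-good for `I` then
`O_τ(I_{(p,σ)}) = O_τ(I)`. -/
theorem stmt16 {n : ℕ} (mσ mτ : MonomialOrder (Fin n))
    (I : Ideal (MvPolynomial (Fin n) ℚ)) (hI : I ≠ ⊥)
    (Gσ Gτ : Finset (MvPolynomial (Fin n) ℚ))
    (hGσ : GB.IsReducedGB mσ Gσ I) (hGτ : GB.IsReducedGB mτ Gτ I)
    (p : ℕ) [Fact p.Prime] (hpσ : ¬ p ∣ GB.denF Gσ) (hpτ : ¬ p ∣ GB.denF Gτ)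
    (L L' : List (Fin n →₀ ℕ))
    (hL : GB.IsOsIdeal mτ
      (Ideal.span ((Gσ.image (GB.piP p) : Finset (MvPolynomial (Fin n) (ZMod p))) :
        Set (MvPolynomial (Fin n) (ZMod p)))) L)
    (hL' : GB.IsOsIdeal mτ I L') :
    L = L' := by
  classical
  obtain ⟨hLs, hLmem⟩ := hL
  obtain ⟨hL's, hL'mem⟩ := hL'
  refine GB.sord_ext mτ L L' hLs hL's fun d => ?_
  rw [hLmem d, hL'mem d]
  have h2 : ∀ h ∈ Ideal.span ((Gσ.image (GB.piP p) :
        Finset (MvPolynomial (Fin n) (ZMod p))) : Set (MvPolynomial (Fin n) (ZMod p))),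
      h ≠ 0 → ∃ f ∈ I, f ≠ 0 ∧ GB.lexp mτ f ≤ GB.lexp mτ h := by
    intro h hh hne
    obtain ⟨F, hFI, hFG, rfl⟩ := GB.exists_preimage mσ hGσ hpσ h hh
    obtain ⟨f, hfI, hf0, hfe⟩ := GB.exists_lexp_eq mτ hGτ hpτ F hFI hFG hne
    exact ⟨f, hfI, hf0, le_of_eq hfe⟩
  have h1 : ∀ f ∈ I, f ≠ 0 → ∃ h ∈ Ideal.span ((Gσ.image (GB.piP p) :
        Finset (MvPolynomial (Fin n) (ZMod p))) : Set (MvPolynomial (Fin n) (ZMod p))),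
      h ≠ 0 ∧ GB.lexp mτ h ≤ GB.lexp mτ f := by
    intro f hfI hf0
    obtain ⟨g, hgG, hgle⟩ := hGτ.1.2.2.2 f hfI hf0
    have hgGood := GB.goodF hpτ g hgG
    have hg1 := hGτ.2.1 g hgG
    have hcast : ((GB.lcoeff mτ g : ℚ) : ZMod p) ≠ 0 := by
      rw [hg1, Rat.cast_one]
      exact one_ne_zero
    refine ⟨GB.piP p g, GB.piP_mem mσ hGσ hpσ g (hGτ.1.2.1 hgG) hgGood, ?_, ?_⟩
    · intro h0
      refine hcast ?_
      rw [show GB.lcoeff mτ g = MvPolynomial.coeff (GB.lexp mτ g) g from rfl,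
        ← GB.coeff_piP g (GB.lexp mτ g), h0, MvPolynomial.coeff_zero]
    · rw [GB.lexp_piP hcast]
      exact hgle
  constructor
  · exact fun hd => GB.minGenSet_sub mτ h2 h1 hd
  · exact fun hd => GB.minGenSet_sub mτ h1 h2 hd
end

section
/- Let P = Q[x_1,...,x_n], σ and τ term orderings, I a nonzero ideal in P, and p, q two primes that are both σ-good for I. If O_τ(I_{(q,σ)}) ≺_τ O_τ(I_{(p,σ)}), then q is τ-bad for I. -/
open MvPolynomial
open scoped Classical

set_option maxHeartbeats 1000000
set_option synthInstance.maxHeartbeats 400000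
namespace Stmt18Aux
open MvPolynomial GB

/-! ### Rational / ZMod layer -/

lemma den_dvd_of_eq_div (a : ℚ) (x y : ℤ) (hy : y ≠ 0) (h : a * (y:ℚ) = (x:ℚ)) :
    (a.den : ℤ) ∣ y := by
  have : a = (x:ℚ) / (y:ℚ) := by field_simp at h ⊢; linarith [h]
  have h2 : a = Rat.divInt x y := by rw [this, Rat.divInt_eq_div]
  rw [h2]; exact Rat.den_dvd x y

lemma mul_den (a : ℚ) : a * (a.den : ℚ) = (a.num : ℚ) := by
  conv_lhs => lhs; rw [← Rat.num_div_den a]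
  have hd : ((a.den : ℚ)) ≠ 0 := by exact_mod_cast a.den_nz
  field_simp

variable (r : ℕ) [hr : Fact r.Prime]

lemma den_cast_ne_zero {a : ℚ} (ha : ¬ r ∣ a.den) : ((a.den : ZMod r)) ≠ 0 := by
  simpa [ZMod.natCast_eq_zero_iff] using ha

lemma num_mul_den {a : ℚ} {x y : ℤ} (h : a * (y:ℚ) = (x:ℚ)) :
    a.num * y = x * (a.den : ℤ) := by
  have h1 : (a.num : ℚ) * (y : ℚ) = (x : ℚ) * (a.den : ℚ) := by
    rw [← mul_den a, mul_right_comm, h]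
  exact_mod_cast h1

lemma redQ_rep {a : ℚ} {x y : ℤ} (hy : ¬ (r:ℤ) ∣ y) (h : a * (y:ℚ) = (x:ℚ)) :
    redQ r a = (x : ZMod r) * (y : ZMod r)⁻¹ := by
  have hy0 : y ≠ 0 := by rintro rfl; exact hy (dvd_zero _)
  have hden : ¬ r ∣ a.den := by
    intro hd
    exact hy (dvd_trans (Int.natCast_dvd_natCast.mpr hd) (den_dvd_of_eq_div a x y hy0 h))
  have hdz : ((a.den : ZMod r)) ≠ 0 := den_cast_ne_zero r hden
  have hyz : ((y : ZMod r)) ≠ 0 := by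
    simpa [ZMod.intCast_zmod_eq_zero_iff_dvd] using hy
  have key : (a.num : ZMod r) * (y : ZMod r) = (x : ZMod r) * (a.den : ZMod r) := by
    have := num_mul_den (a := a) (x := x) (y := y) h
    exact_mod_cast congrArg (Int.cast : ℤ → ZMod r) this
  unfold GB.redQ
  field_simp
  linear_combination key

lemma not_dvd_one : ¬ (r:ℤ) ∣ (1:ℤ) := by
  intro hh
  have h2 := Int.le_of_dvd one_pos hh
  have := hr.out.two_le
  omega

lemma not_dvd_mul_den {a b : ℚ} (ha : ¬ r ∣ a.den) (hb : ¬ r ∣ b.den) :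
    ¬ (r:ℤ) ∣ ((a.den : ℤ) * (b.den : ℤ)) := by
  intro hh
  rcases (Int.Prime.dvd_mul' (by exact_mod_cast hr.out) hh) with h1 | h1
  · exact ha (Int.ofNat_dvd.mp (by exact_mod_cast h1))
  · exact hb (Int.ofNat_dvd.mp (by exact_mod_cast h1))

lemma add_eq_div (a b : ℚ) :
    (a + b) * (((a.den : ℤ) * (b.den : ℤ) : ℤ) : ℚ)
      = ((a.num * b.den + b.num * a.den : ℤ) : ℚ) := by
  push_cast
  rw [add_mul, show a * ((a.den:ℚ) * b.den) = (a * a.den) * b.den by ring,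
    show b * ((a.den:ℚ) * b.den) = (b * b.den) * a.den by ring, mul_den, mul_den]

lemma mul_eq_div (a b : ℚ) :
    (a * b) * (((a.den : ℤ) * (b.den : ℤ) : ℤ) : ℚ) = ((a.num * b.num : ℤ) : ℚ) := by
  push_cast
  rw [show a * b * ((a.den:ℚ) * b.den) = (a * a.den) * (b * b.den) by ring, mul_den, mul_den]

lemma redQ_intCast (x : ℤ) : redQ r ((x : ℚ)) = (x : ZMod r) := by
  have h : ((x:ℚ)) * ((1:ℤ):ℚ) = ((x:ℤ):ℚ) := by norm_num
  rw [redQ_rep r (not_dvd_one r) h]; simp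

lemma redQ_zero : redQ r 0 = 0 := by simp [GB.redQ]

lemma redQ_one : redQ r 1 = 1 := by simp [GB.redQ]

lemma redQ_add {a b : ℚ} (ha : ¬ r ∣ a.den) (hb : ¬ r ∣ b.den) :
    redQ r (a + b) = redQ r a + redQ r b := by
  rw [redQ_rep r (not_dvd_mul_den r ha hb) (add_eq_div a b)]
  unfold GB.redQ
  have h1 := den_cast_ne_zero r ha
  have h2 := den_cast_ne_zero r hb
  push_cast
  field_simp

lemma redQ_mul {a b : ℚ} (ha : ¬ r ∣ a.den) (hb : ¬ r ∣ b.den) :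
    redQ r (a * b) = redQ r a * redQ r b := by
  rw [redQ_rep r (not_dvd_mul_den r ha hb) (mul_eq_div a b)]
  unfold GB.redQ
  have h1 := den_cast_ne_zero r ha
  have h2 := den_cast_ne_zero r hb
  push_cast
  field_simp

lemma redQ_ne_zero {a : ℚ} (hd : ¬ r ∣ a.den) (hn : ¬ (r:ℤ) ∣ a.num) :
    redQ r a ≠ 0 := by
  unfold GB.redQ
  have h1 := den_cast_ne_zero r hd
  have h2 : ((a.num : ZMod r)) ≠ 0 := by
    simpa [ZMod.intCast_zmod_eq_zero_iff_dvd] using hn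
  exact mul_ne_zero h2 (inv_ne_zero h1)

lemma mem_den_add {a b : ℚ} (ha : ¬ r ∣ a.den) (hb : ¬ r ∣ b.den) : ¬ r ∣ (a+b).den := by
  intro hh
  have h0 : ((a.den:ℤ) * (b.den:ℤ)) ≠ 0 := by
    have := a.den_nz; have := b.den_nz
    simp_all [Int.mul_ne_zero_iff]
  have := den_dvd_of_eq_div _ _ _ h0 (add_eq_div a b)
  exact not_dvd_mul_den r ha hb (dvd_trans (Int.natCast_dvd_natCast.mpr hh) this)

lemma mem_den_mul {a b : ℚ} (ha : ¬ r ∣ a.den) (hb : ¬ r ∣ b.den) : ¬ r ∣ (a*b).den := by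
  intro hh
  have h0 : ((a.den:ℤ) * (b.den:ℤ)) ≠ 0 := by
    have := a.den_nz; have := b.den_nz
    simp_all [Int.mul_ne_zero_iff]
  have := den_dvd_of_eq_div _ _ _ h0 (mul_eq_div a b)
  exact not_dvd_mul_den r ha hb (dvd_trans (Int.natCast_dvd_natCast.mpr hh) this)

/-- the subring of `r`-integral rationals -/
def Rsub : Subring ℚ where
  carrier := {a : ℚ | ¬ r ∣ a.den}
  zero_mem' := by
    simp only [Set.mem_setOf_eq, Rat.den_zero, Nat.dvd_one]
    exact hr.out.ne_one
  one_mem' := by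
    simp only [Set.mem_setOf_eq, Rat.den_one, Nat.dvd_one]
    exact hr.out.ne_one
  add_mem' := fun ha hb => mem_den_add r ha hb
  mul_mem' := fun ha hb => mem_den_mul r ha hb
  neg_mem' := by intro a ha; simpa [Rat.neg_den] using ha

/-- reduction mod r as a ring hom on `Rsub` -/
noncomputable def phi : Rsub r →+* ZMod r where
  toFun a := redQ r a.1
  map_one' := redQ_one r
  map_zero' := redQ_zero r
  map_add' a b := redQ_add r a.2 b.2
  map_mul' a b := redQ_mul r a.2 b.2

lemma phi_surjective : Function.Surjective (phi r) := by
  intro c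
  refine ⟨⟨((c.val : ℤ) : ℚ), ?_⟩, ?_⟩
  · show ¬ r ∣ (((c.val : ℤ):ℚ)).den
    simp only [Rat.den_intCast, Nat.dvd_one]
    exact hr.out.ne_one
  · show redQ r _ = c
    rw [redQ_intCast r]
    push_cast
    exact ZMod.natCast_rightInverse c


/-! ### lexp layer -/

section Lexp
open scoped MonomialOrder
variable {n : ℕ} (m : MonomialOrder (Fin n))

lemma toSyn_lexp {K : Type*} [CommSemiring K] (f : MvPolynomial (Fin n) K) :
    m.toSyn (lexp m f) = f.support.sup fun d => m.toSyn d := by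
  simp [GB.lexp]

lemma lexp_mem_support {K : Type*} [CommSemiring K] {f : MvPolynomial (Fin n) K}
    (hf : f ≠ 0) : lexp m f ∈ f.support := by
  obtain ⟨b, hb, he⟩ := Finset.exists_mem_eq_sup f.support
    (by simpa [MvPolynomial.support_eq_empty] using hf) (fun d => m.toSyn d)
  have : lexp m f = b := by rw [GB.lexp, he]; exact m.toSyn.symm_apply_apply b
  rwa [this]

lemma le_toSyn_lexp {K : Type*} [CommSemiring K] {f : MvPolynomial (Fin n) K}
    {d : Fin n →₀ ℕ} (hd : d ∈ f.support) : m.toSyn d ≤ m.toSyn (lexp m f) := by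
  rw [toSyn_lexp]; exact Finset.le_sup hd

lemma coeff_eq_zero_of_gt {K : Type*} [CommSemiring K] {f : MvPolynomial (Fin n) K}
    {d : Fin n →₀ ℕ} (hd : m.toSyn (lexp m f) < m.toSyn d) : MvPolynomial.coeff d f = 0 := by
  by_contra h
  exact absurd (le_toSyn_lexp m (by simpa [MvPolynomial.mem_support_iff] using h)) (not_le.mpr hd)

lemma lcoeff_ne_zero {K : Type*} [CommSemiring K] {f : MvPolynomial (Fin n) K}
    (hf : f ≠ 0) : lcoeff m f ≠ 0 := by
  have := lexp_mem_support m hf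
  simpa [GB.lcoeff, MvPolynomial.mem_support_iff] using this

lemma lexp_eq_of {K : Type*} [CommSemiring K] {f : MvPolynomial (Fin n) K}
    {d : Fin n →₀ ℕ} (hd : d ∈ f.support)
    (hmax : ∀ e ∈ f.support, m.toSyn e ≤ m.toSyn d) : lexp m f = d := by
  have h1 : m.toSyn (lexp m f) ≤ m.toSyn d := by
    have hf : f ≠ 0 := fun h => by simp [h] at hd
    exact hmax _ (lexp_mem_support m hf)
  have h2 := le_toSyn_lexp m hd
  exact m.toSyn.injective (le_antisymm h1 h2)

/-- if all coefficients at and above `t` vanish, then `f = 0` or `lexp f ≺ t` -/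
lemma lexp_lt_of {K : Type*} [CommSemiring K] {f : MvPolynomial (Fin n) K}
    {t : Fin n →₀ ℕ} (h : ∀ d, m.toSyn t ≤ m.toSyn d → MvPolynomial.coeff d f = 0) :
    f = 0 ∨ m.toSyn (lexp m f) < m.toSyn t := by
  by_cases hf : f = 0
  · exact Or.inl hf
  · right
    by_contra hc
    push_neg at hc
    exact absurd (h _ hc) (by simpa [MvPolynomial.mem_support_iff] using lexp_mem_support m hf)

lemma lexp_monomial_one_mul {K : Type*} [Field K] {f : MvPolynomial (Fin n) K}
    (hf : f ≠ 0) (e : Fin n →₀ ℕ) :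
    MvPolynomial.monomial e (1:K) * f ≠ 0 ∧
      lexp m (MvPolynomial.monomial e (1:K) * f) = e + lexp m f := by
  have hm : (MvPolynomial.monomial e (1:K)) ≠ 0 := by
    simp [MvPolynomial.monomial_eq_zero]
  have hne : MvPolynomial.monomial e (1:K) * f ≠ 0 := mul_ne_zero hm hf
  refine ⟨hne, ?_⟩
  apply lexp_eq_of
  · rw [MvPolynomial.mem_support_iff, MvPolynomial.coeff_monomial_mul' ]
    have h1 : e ≤ e + lexp m f := self_le_add_right e _
    rw [if_pos h1, add_tsub_cancel_left, one_mul]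
    exact lcoeff_ne_zero m hf
  · intro x hx
    rw [MvPolynomial.mem_support_iff, MvPolynomial.coeff_monomial_mul'] at hx
    by_cases hle : e ≤ x
    · have hxe : x - e ∈ f.support := by
        rw [MvPolynomial.mem_support_iff]
        intro hz
        simp [hle, hz] at hx
      have h1 := le_toSyn_lexp m hxe
      have hx' : x = e + (x - e) := by rw [add_tsub_cancel_of_le hle]
      calc m.toSyn x = m.toSyn e + m.toSyn (x - e) := by rw [← map_add]; exact congrArg _ hx'
        _ ≤ m.toSyn e + m.toSyn (lexp m f) := by exact add_le_add (le_refl _) h1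
        _ = m.toSyn (e + lexp m f) := by rw [← map_add]
    · simp [hle] at hx

end Lexp
/-! ### piP bridging layer -/

noncomputable def iot (r : ℕ) [Fact r.Prime] : Rsub r →+* ℚ := (Rsub r).subtype

section Bridge
open scoped MonomialOrder
variable {n : ℕ} (r : ℕ) [hr : Fact r.Prime]



lemma coeff_piP (f : MvPolynomial (Fin n) ℚ) (d : Fin n →₀ ℕ) :
    MvPolynomial.coeff d (piP r f) = redQ r (MvPolynomial.coeff d f) := by
  unfold GB.piP
  rw [MvPolynomial.coeff_sum]
  by_cases hd : d ∈ f.support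
  · rw [Finset.sum_eq_single d]
    · simp [MvPolynomial.coeff_monomial]
    · intro b _ hbd; simp [MvPolynomial.coeff_monomial, hbd]
    · intro h; exact absurd hd h
  · have h0 : MvPolynomial.coeff d f = 0 := by simpa [MvPolynomial.mem_support_iff] using hd
    rw [h0, redQ_zero]
    apply Finset.sum_eq_zero
    intro b hb
    have hbd : b ≠ d := fun h => hd (h ▸ hb)
    simp [MvPolynomial.coeff_monomial, hbd]

lemma piP_map (F : MvPolynomial (Fin n) (Rsub r)) :
    piP r (MvPolynomial.map (iot r) F) = MvPolynomial.map (phi r) F := by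
  apply MvPolynomial.ext
  intro d
  rw [coeff_piP, MvPolynomial.coeff_map, MvPolynomial.coeff_map]
  rfl

lemma iota_injective : Function.Injective (iot r) := Subtype.val_injective

lemma map_iota_injective :
    Function.Injective (MvPolynomial.map (σ := Fin n) (iot r)) :=
  MvPolynomial.map_injective _ (iota_injective r)

lemma support_map_iota (F : MvPolynomial (Fin n) (Rsub r)) :
    (MvPolynomial.map (iot r) F).support = F.support :=
  MvPolynomial.support_map_of_injective _ (iota_injective r)

lemma exists_lift (f : MvPolynomial (Fin n) ℚ) (h : ∀ d, ¬ r ∣ (MvPolynomial.coeff d f).den) :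
    ∃ F : MvPolynomial (Fin n) (Rsub r), MvPolynomial.map (iot r) F = f := by
  refine ⟨f.support.sum fun d => MvPolynomial.monomial d ⟨MvPolynomial.coeff d f, h d⟩, ?_⟩
  rw [map_sum (MvPolynomial.map (iot r))]
  simp only [MvPolynomial.map_monomial]
  exact MvPolynomial.support_sum_monomial_coeff f

lemma coeff_den_not_dvd {G : Finset (MvPolynomial (Fin n) ℚ)} (hG : ¬ r ∣ denF G)
    {g : MvPolynomial (Fin n) ℚ} (hg : g ∈ G) (d : Fin n →₀ ℕ) :
    ¬ r ∣ (MvPolynomial.coeff d g).den := by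
  intro hh
  apply hG
  have h1 : (MvPolynomial.coeff d g).den ∣ den g := by
    by_cases hd : d ∈ g.support
    · exact Finset.dvd_lcm hd
    · have : MvPolynomial.coeff d g = 0 := by simpa [MvPolynomial.mem_support_iff] using hd
      rw [this]; exact one_dvd _
  have h2 : den g ∣ denF G := Finset.dvd_lcm hg
  exact hh.trans (h1.trans h2)

end Bridge

/-! ### reduction step -/

section Reduce
open scoped MonomialOrder
variable {n : ℕ} (m : MonomialOrder (Fin n))

lemma reduce_step {K : Type*} [Field K] {f g : MvPolynomial (Fin n) K}
    (hf : f ≠ 0) (hg1 : lcoeff m g = 1) (hle : lexp m g ≤ lexp m f) :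
    ∀ d, m.toSyn (lexp m f) ≤ m.toSyn d →
      MvPolynomial.coeff d (f - MvPolynomial.C (lcoeff m f) *
        (MvPolynomial.monomial (lexp m f - lexp m g) (1:K) * g)) = 0 := by
  intro d hd
  set e := lexp m f - lexp m g with he
  rw [MvPolynomial.coeff_sub, MvPolynomial.coeff_C_mul, MvPolynomial.coeff_monomial_mul']
  rcases eq_or_lt_of_le hd with heq | hlt
  · have hdd : d = lexp m f := m.toSyn.injective heq.symm
    have hee : e ≤ lexp m f := by rw [he]; exact tsub_le_self
    rw [hdd, if_pos hee, he, tsub_tsub_cancel_of_le hle]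
    show lcoeff m f - lcoeff m f * (1 * lcoeff m g) = 0
    rw [hg1]; ring
  · have h1 : MvPolynomial.coeff d f = 0 := coeff_eq_zero_of_gt m hlt
    rw [h1]
    by_cases hee : e ≤ d
    · rw [if_pos hee]
      have hsplit : d = e + (d - e) := (add_tsub_cancel_of_le hee).symm
      have hf2 : lexp m f = e + lexp m g := by rw [he, tsub_add_cancel_of_le hle]
      have : m.toSyn (lexp m g) < m.toSyn (d - e) := by
        have h2 : m.toSyn e + m.toSyn (lexp m g) < m.toSyn e + m.toSyn (d - e) := by
          rw [← map_add, ← map_add, ← hf2, ← hsplit]; exact hlt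
        exact lt_of_add_lt_add_left h2
      rw [coeff_eq_zero_of_gt m this]
      ring
    · rw [if_neg hee]; ring

end Reduce
/-! ### Main reduction lemmas -/

section Main
open scoped MonomialOrder
variable {n : ℕ} (r : ℕ) [hr : Fact r.Prime] (m : MonomialOrder (Fin n))
variable (I : Ideal (MvPolynomial (Fin n) ℚ)) (G : Finset (MvPolynomial (Fin n) ℚ))

/-- reduction of a `r`-integral element of `I` lies in the span of the reduction of a
`r`-good Gröbner basis `G` of `I`. -/
lemma main1 (hGI : (G : Set (MvPolynomial (Fin n) ℚ)) ⊆ I)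
    (hGB : ∀ f ∈ I, f ≠ 0 → ∃ g ∈ G, lexp m g ≤ lexp m f)
    (hGl : ∀ g ∈ G, lcoeff m g = 1)
    (hden : ¬ r ∣ denF G) :
    ∀ F : MvPolynomial (Fin n) (Rsub r), MvPolynomial.map (iot r) F ∈ I →
      MvPolynomial.map (phi r) F ∈ Ideal.span (piP r '' (G : Set (MvPolynomial (Fin n) ℚ))) := by
  set S := Ideal.span (piP r '' (G : Set (MvPolynomial (Fin n) ℚ))) with hS
  suffices H : ∀ x : m.syn, ∀ F : MvPolynomial (Fin n) (Rsub r),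
      MvPolynomial.map (iot r) F ∈ I → m.toSyn (lexp m (MvPolynomial.map (iot r) F)) = x →
      MvPolynomial.map (phi r) F ∈ S by
    intro F hF; exact H _ F hF rfl
  intro x
  induction x using WellFoundedLT.induction with
  | _ x ih =>
  intro F hF hx
  by_cases hf0 : MvPolynomial.map (iot r) F = 0
  · have hF0 : F = 0 := map_iota_injective r (by simpa using hf0)
    rw [hF0, map_zero]
    exact Ideal.zero_mem S
  · set f := MvPolynomial.map (iot r) F with hfdef
    obtain ⟨g, hgG, hle⟩ := hGB f hF hf0
    obtain ⟨Gg, hGg⟩ := exists_lift r g (coeff_den_not_dvd r hden hgG)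
    set e := lexp m f - lexp m g with he
    set Cc : Rsub r := MvPolynomial.coeff (lexp m f) F with hCc
    set F' := F - MvPolynomial.C Cc * (MvPolynomial.monomial e (1 : Rsub r) * Gg) with hF'
    have hmem : piP r g ∈ S := by
      rw [hS]
      exact Ideal.subset_span ⟨g, hgG, rfl⟩
    have hiC : (iot r) Cc = lcoeff m f := by
      rw [hCc]
      show (iot r) (MvPolynomial.coeff (lexp m f) F) = MvPolynomial.coeff (lexp m f) f
      rw [hfdef, MvPolynomial.coeff_map]
    have hf' : MvPolynomial.map (iot r) F'
        = f - MvPolynomial.C (lcoeff m f) * (MvPolynomial.monomial e (1:ℚ) * g) := by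
      rw [hF', map_sub, map_mul, map_mul, MvPolynomial.map_C, hiC,
        MvPolynomial.map_monomial, hGg]
      norm_num
      exact hfdef.symm
    have hphi : MvPolynomial.map (phi r) F' = MvPolynomial.map (phi r) F
        - MvPolynomial.C ((phi r) Cc) * (MvPolynomial.monomial e (1 : ZMod r) *
          MvPolynomial.map (phi r) Gg) := by
      rw [hF', map_sub, map_mul, map_mul, MvPolynomial.map_C, MvPolynomial.map_monomial]
      norm_num
    have hsecond : MvPolynomial.C ((phi r) Cc) * (MvPolynomial.monomial e (1 : ZMod r) *
        MvPolynomial.map (phi r) Gg) ∈ S := by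
      have : MvPolynomial.map (phi r) Gg = piP r g := by rw [← hGg, piP_map]
      rw [this]
      exact Ideal.mul_mem_left _ _ (Ideal.mul_mem_left _ _ hmem)
    have hcancel := reduce_step m hf0 (hGl g hgG) hle
    rcases lexp_lt_of m (f := f - MvPolynomial.C (lcoeff m f) *
        (MvPolynomial.monomial e (1:ℚ) * g)) (t := lexp m f) hcancel with h0 | hlt
    · have hF'0 : F' = 0 := by
        apply map_iota_injective r
        rw [hf', h0, map_zero]
      have : MvPolynomial.map (phi r) F = MvPolynomial.C ((phi r) Cc) *
          (MvPolynomial.monomial e (1 : ZMod r) * MvPolynomial.map (phi r) Gg) := by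
        have h2 := hphi
        rw [hF'0, map_zero] at h2
        have := congrArg (fun z => MvPolynomial.map (phi r) F + z) h2.symm
        simpa using (by linear_combination -h2 : MvPolynomial.map (phi r) F = _)
      rw [this]
      exact hsecond
    · have hF'I : MvPolynomial.map (iot r) F' ∈ I := by
        rw [hf']
        refine Ideal.sub_mem I hF ?_
        exact Ideal.mul_mem_left _ _ (Ideal.mul_mem_left _ _ (hGI hgG))
      have hlt' : m.toSyn (lexp m (MvPolynomial.map (iot r) F')) < x := by
        rw [hf', ← hx]; exact hlt
      have hmem' := ih _ hlt' F' hF'I rfl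
      have : MvPolynomial.map (phi r) F = MvPolynomial.map (phi r) F'
          + MvPolynomial.C ((phi r) Cc) * (MvPolynomial.monomial e (1 : ZMod r) *
            MvPolynomial.map (phi r) Gg) := by
        rw [hphi]; ring
      rw [this]
      exact Ideal.add_mem S hmem' hsecond

/-- every element of the span of the reductions lifts to an `r`-integral element of `I`. -/
lemma span_lift (hGI : (G : Set (MvPolynomial (Fin n) ℚ)) ⊆ I) (hden : ¬ r ∣ denF G) :
    ∀ h ∈ Ideal.span (piP r '' (G : Set (MvPolynomial (Fin n) ℚ))),
      ∃ F : MvPolynomial (Fin n) (Rsub r),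
        MvPolynomial.map (iot r) F ∈ I ∧ MvPolynomial.map (phi r) F = h := by
  intro h hh
  refine Submodule.span_induction ?_ ?_ ?_ ?_ hh
  · rintro x ⟨g, hg, rfl⟩
    obtain ⟨Gg, hGg⟩ := exists_lift r g (coeff_den_not_dvd r hden hg)
    exact ⟨Gg, by rw [hGg]; exact hGI hg, by rw [← hGg, piP_map]⟩
  · exact ⟨0, by simp⟩
  · rintro x y _ _ ⟨F1, hF1, hF1'⟩ ⟨F2, hF2, hF2'⟩
    exact ⟨F1 + F2, by rw [map_add]; exact Ideal.add_mem I hF1 hF2,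
      by rw [map_add, hF1', hF2']⟩
  · rintro a x _ ⟨F1, hF1, hF1'⟩
    obtain ⟨A, hA⟩ := MvPolynomial.map_surjective _ (phi_surjective r) a
    refine ⟨A * F1, ?_, ?_⟩
    · rw [map_mul]; exact Ideal.mul_mem_left I _ hF1
    · rw [map_mul, hA, hF1']; rfl

/-- the reduction of a `r`-good GB is a Gröbner basis (w.r.t. any order `m'` whose reduced
GB `G` has `r`-integral coefficients): minimal-lift argument. -/
lemma red_GB (hGI : (G : Set (MvPolynomial (Fin n) ℚ)) ⊆ I)
    (hGB : ∀ f ∈ I, f ≠ 0 → ∃ g ∈ G, lexp m g ≤ lexp m f)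
    (hGl : ∀ g ∈ G, lcoeff m g = 1)
    (hden : ¬ r ∣ denF G)
    (G' : Finset (MvPolynomial (Fin n) ℚ)) (hG'I : (G' : Set (MvPolynomial (Fin n) ℚ)) ⊆ I)
    (hden' : ¬ r ∣ denF G') :
    ∀ h ∈ Ideal.span (piP r '' (G' : Set (MvPolynomial (Fin n) ℚ))), h ≠ 0 →
      ∃ g ∈ G, lexp m g ≤ lexp m h := by
  intro h hh hne
  -- the set of "toSyn lexp of lifts"
  set T : Set m.syn := {x | ∃ F : MvPolynomial (Fin n) (Rsub r),
    MvPolynomial.map (iot r) F ∈ I ∧ MvPolynomial.map (phi r) F = h ∧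
    m.toSyn (lexp m (MvPolynomial.map (iot r) F)) = x} with hT
  have hTne : T.Nonempty := by
    obtain ⟨F, hF1, hF2⟩ := span_lift r I G' hG'I hden' h hh
    exact ⟨_, F, hF1, hF2, rfl⟩
  obtain ⟨x₀, hx₀T, hx₀min⟩ := (IsWellFounded.wf (α := m.syn) (r := (· < ·))).has_min T hTne
  obtain ⟨F, hFI, hFh, hFx⟩ := hx₀T
  set f := MvPolynomial.map (iot r) F with hfdef
  have hf0 : f ≠ 0 := by
    intro h0
    have : F = 0 := map_iota_injective r (by simpa using h0)
    rw [this, map_zero] at hFh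
    exact hne hFh.symm
  obtain ⟨g, hgG, hle⟩ := hGB f hFI hf0
  obtain ⟨Gg, hGg⟩ := exists_lift r g (coeff_den_not_dvd r hden hgG)
  set e := lexp m f - lexp m g with he
  set Cc : Rsub r := MvPolynomial.coeff (lexp m f) F with hCc
  by_cases hphiC : (phi r) Cc = 0
  · -- subtract the leading part; the reduction is unchanged, contradiction with minimality
    exfalso
    set F' := F - MvPolynomial.C Cc * (MvPolynomial.monomial e (1 : Rsub r) * Gg) with hF'
    have hiC : (iot r) Cc = lcoeff m f := by
      rw [hCc]
      show (iot r) (MvPolynomial.coeff (lexp m f) F) = MvPolynomial.coeff (lexp m f) f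
      rw [hfdef, MvPolynomial.coeff_map]
    have hf' : MvPolynomial.map (iot r) F'
        = f - MvPolynomial.C (lcoeff m f) * (MvPolynomial.monomial e (1:ℚ) * g) := by
      rw [hF', map_sub, map_mul, map_mul, MvPolynomial.map_C, hiC,
        MvPolynomial.map_monomial, hGg]
      norm_num
      exact hfdef.symm
    have hphi' : MvPolynomial.map (phi r) F' = h := by
      rw [hF', map_sub, map_mul, MvPolynomial.map_C, hphiC, hFh]
      simp
    have hF'I : MvPolynomial.map (iot r) F' ∈ I := by
      rw [hf']
      exact Ideal.sub_mem I hFI (Ideal.mul_mem_left _ _ (Ideal.mul_mem_left _ _ (hGI hgG)))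
    have hcancel := reduce_step m hf0 (hGl g hgG) hle
    rcases lexp_lt_of m (f := f - MvPolynomial.C (lcoeff m f) *
        (MvPolynomial.monomial e (1:ℚ) * g)) (t := lexp m f) hcancel with h0 | hlt
    · have hF'0 : F' = 0 := map_iota_injective r (by rw [hf', h0, map_zero])
      rw [hF'0, map_zero] at hphi'
      exact hne hphi'.symm
    · rw [← hf'] at hlt
      rw [hFx] at hlt
      exact hx₀min _ ⟨F', hF'I, hphi', rfl⟩ hlt
  · -- the leading coefficient survives: lexp h = lexp f
    refine ⟨g, hgG, ?_⟩
    have hcoeff : MvPolynomial.coeff (lexp m f) h = (phi r) Cc := by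
      rw [← hFh, MvPolynomial.coeff_map, hCc]
    have hmem : lexp m f ∈ h.support := by
      rw [MvPolynomial.mem_support_iff, hcoeff]; exact hphiC
    have hsub : h.support ⊆ f.support := by
      rw [← hFh, hfdef, support_map_iota]
      exact MvPolynomial.support_map_subset _ _
    have h1 : m.toSyn (lexp m h) ≤ m.toSyn (lexp m f) := by
      have := hsub (lexp_mem_support m (fun h0 => hne h0))
      exact le_toSyn_lexp m this
    have h2 : m.toSyn (lexp m f) ≤ m.toSyn (lexp m h) := le_toSyn_lexp m hmem
    have : lexp m h = lexp m f := m.toSyn.injective (le_antisymm h1 h2)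
    rw [this]
    exact hle

/-- reduction of a polynomial with `lcoeff = 1`: nonzero with same leading exponent. -/
lemma piP_lexp_eq {g : MvPolynomial (Fin n) ℚ} (hg0 : g ≠ 0) (hgl : lcoeff m g = 1)
    (hden : ∀ d, ¬ r ∣ (MvPolynomial.coeff d g).den) :
    piP r g ≠ 0 ∧ lexp m (piP r g) = lexp m g := by
  have hmem : lexp m g ∈ (piP r g).support := by
    rw [MvPolynomial.mem_support_iff, coeff_piP]
    show redQ r (lcoeff m g) ≠ 0
    rw [hgl, redQ_one]
    exact one_ne_zero
  have hne : piP r g ≠ 0 := fun h0 => by simp [h0] at hmem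
  refine ⟨hne, ?_⟩
  apply lexp_eq_of m hmem
  intro x hx
  have hxs : x ∈ g.support := by
    rw [MvPolynomial.mem_support_iff] at hx ⊢
    rw [coeff_piP] at hx
    intro h0
    rw [h0, redQ_zero] at hx
    exact hx rfl
  exact le_toSyn_lexp m hxs

end Main

/-! ### M-sets and minimal generators -/

section MSet
open scoped MonomialOrder
variable {n : ℕ} (m : MonomialOrder (Fin n))

/-- the set of leading exponents of nonzero elements -/
def MSet {K : Type*} [Field K] (J : Ideal (MvPolynomial (Fin n) K)) : Set (Fin n →₀ ℕ) :=
  {e | ∃ h ∈ J, h ≠ 0 ∧ lexp m h = e}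

lemma minGenSet_eq_of_MSet_eq {K K' : Type*} [Field K] [Field K']
    {J : Ideal (MvPolynomial (Fin n) K)} {J' : Ideal (MvPolynomial (Fin n) K')}
    (h : MSet m J = MSet m J') : minGenSet m J = minGenSet m J' := by
  ext d
  constructor
  · rintro ⟨⟨f, hf, hf0, hfd⟩, hmin⟩
    have hd : d ∈ MSet m J' := h ▸ ⟨f, hf, hf0, hfd⟩
    obtain ⟨f', hf', hf0', hfd'⟩ := hd
    refine ⟨⟨f', hf', hf0', hfd'⟩, ?_⟩
    intro g hg hg0 hgd
    have : lexp m g ∈ MSet m J := h ▸ (⟨g, hg, hg0, rfl⟩ : lexp m g ∈ MSet m J')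
    obtain ⟨g2, hg2, hg20, hg2d⟩ := this
    exact hg2d ▸ hmin g2 hg2 hg20 (hg2d.symm ▸ hgd)
  · rintro ⟨⟨f, hf, hf0, hfd⟩, hmin⟩
    have hd : d ∈ MSet m J := h.symm ▸ ⟨f, hf, hf0, hfd⟩
    obtain ⟨f', hf', hf0', hfd'⟩ := hd
    refine ⟨⟨f', hf', hf0', hfd'⟩, ?_⟩
    intro g hg hg0 hgd
    have : lexp m g ∈ MSet m J' := h.symm ▸ (⟨g, hg, hg0, rfl⟩ : lexp m g ∈ MSet m J)
    obtain ⟨g2, hg2, hg20, hg2d⟩ := this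
    exact hg2d ▸ hmin g2 hg2 hg20 (hg2d.symm ▸ hgd)

/-- every element of the M-set is divisible by a minimal one. -/
lemma exists_minGen_dvd {K : Type*} [Field K] {J : Ideal (MvPolynomial (Fin n) K)}
    {e : Fin n →₀ ℕ} (he : e ∈ MSet m J) : ∃ d ∈ minGenSet m J, d ≤ e := by
  set T : Set m.syn := {x | ∃ e' ∈ MSet m J, e' ≤ e ∧ m.toSyn e' = x} with hT
  have hTne : T.Nonempty := ⟨m.toSyn e, e, he, le_refl e, rfl⟩
  obtain ⟨x₀, hx₀T, hx₀min⟩ := (IsWellFounded.wf (α := m.syn) (r := (· < ·))).has_min T hTne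
  obtain ⟨d, hdM, hde, hdx⟩ := hx₀T
  obtain ⟨f, hf, hf0, hfd⟩ := hdM
  refine ⟨d, ⟨⟨f, hf, hf0, hfd⟩, ?_⟩, hde⟩
  intro g hg hg0 hgd
  have hgM : lexp m g ∈ MSet m J := ⟨g, hg, hg0, rfl⟩
  have hge : lexp m g ≤ e := le_trans hgd hde
  have h1 : ¬ m.toSyn (lexp m g) < x₀ := hx₀min _ ⟨lexp m g, hgM, hge, rfl⟩
  have h2 : m.toSyn (lexp m g) ≤ m.toSyn d := m.toSyn_monotone hgd
  rw [← hdx] at h1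
  exact m.toSyn.injective (le_antisymm h2 (not_lt.mp h1))

end MSet

/-! ### scaling: making an element r-primitive -/

section Scale
open scoped MonomialOrder
variable {n : ℕ} (r : ℕ) [hr : Fact r.Prime] (m : MonomialOrder (Fin n))

lemma piP_support_subset (f : MvPolynomial (Fin n) ℚ) :
    (piP r f).support ⊆ f.support := by
  intro d hd
  rw [MvPolynomial.mem_support_iff, coeff_piP] at hd
  rw [MvPolynomial.mem_support_iff]
  intro h0
  rw [h0, redQ_zero] at hd
  exact hd rfl

lemma scale_primitive {g : MvPolynomial (Fin n) ℚ} (hg0 : g ≠ 0) :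
    ∃ c : ℚ, c ≠ 0 ∧ (∀ d, ¬ r ∣ (MvPolynomial.coeff d (MvPolynomial.C c * g)).den) ∧
      piP r (MvPolynomial.C c * g) ≠ 0 := by
  classical
  set D : ℕ := den g with hD
  have hD0 : (D : ℚ) ≠ 0 := by
    have : D ≠ 0 := by
      rw [hD]
      unfold GB.den
      intro h0
      exact absurd (Finset.lcm_eq_zero_iff.mp h0) (by
        intro hmem
        obtain ⟨d, _, hd⟩ := hmem
        exact (MvPolynomial.coeff d g).den_nz hd)
    exact_mod_cast this
  -- integer numerators
  have hz : ∀ d ∈ g.support, ∃ z : ℤ, MvPolynomial.coeff d g * (D:ℚ) = (z:ℚ) ∧ z ≠ 0 := by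
    intro d hd
    have hdvd : (MvPolynomial.coeff d g).den ∣ D := Finset.dvd_lcm hd
    obtain ⟨k, hk⟩ := hdvd
    refine ⟨(MvPolynomial.coeff d g).num * k, ?_, ?_⟩
    · push_cast
      rw [hk]
      push_cast
      rw [show ((MvPolynomial.coeff d g).den : ℚ) * (k:ℚ)
          = ((MvPolynomial.coeff d g).den : ℚ) * (k:ℚ) from rfl, ← mul_assoc, mul_den]
    · intro h0
      rcases mul_eq_zero.mp h0 with h1 | h1
      · exact (MvPolynomial.mem_support_iff.mp hd) (by
          exact_mod_cast Rat.num_eq_zero.mp h1)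
      · apply hD0
        have hk0 : k = 0 := by exact_mod_cast h1
        rw [hk, hk0, mul_zero]
        norm_num
  choose z hz1 hz2 using hz
  -- minimal r-adic valuation
  have hsupne : g.support.Nonempty := by
    rw [Finset.nonempty_iff_ne_empty]
    simpa [MvPolynomial.support_eq_empty] using hg0
  set vals := g.support.attach.image
    (fun d => ((z d.1 d.2).natAbs.factorization) r) with hvals
  have hvalsne : vals.Nonempty := (Finset.Nonempty.image (by simpa using hsupne) _)
  set m0 := vals.min' hvalsne with hm0
  obtain ⟨d0att, hd0mem, hd0⟩ := Finset.mem_image.mp (vals.min'_mem hvalsne)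
  have hdvdall : ∀ (d) (hd : d ∈ g.support), ((r:ℤ))^m0 ∣ z d hd := by
    intro d hd
    have h1 : m0 ≤ ((z d hd).natAbs.factorization) r := by
      apply Finset.min'_le
      rw [hvals]
      exact Finset.mem_image.mpr ⟨⟨d, hd⟩, Finset.mem_attach _ _, rfl⟩
    have h2 : (r:ℕ)^m0 ∣ (z d hd).natAbs :=
      dvd_trans (pow_dvd_pow r h1) (Nat.ordProj_dvd _ r)
    exact_mod_cast Int.natCast_dvd.mpr h2
  -- the witness exponent d0 and quotients
  set c : ℚ := (D:ℚ) / (r:ℚ)^m0 with hc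
  have hrQ : ((r:ℚ))^m0 ≠ 0 := by
    have : (r:ℚ) ≠ 0 := by
      have := hr.out.pos
      exact_mod_cast this.ne'
    exact pow_ne_zero _ this
  have hc0 : c ≠ 0 := div_ne_zero hD0 hrQ
  -- coefficients of C c * g
  have hw : ∀ (d) (hd : d ∈ g.support), ∃ w : ℤ,
      MvPolynomial.coeff d (MvPolynomial.C c * g) = (w:ℚ) ∧ (r:ℤ)^m0 * w = z d hd := by
    intro d hd
    obtain ⟨w, hww⟩ := hdvdall d hd
    refine ⟨w, ?_, hww.symm⟩
    rw [MvPolynomial.coeff_C_mul, hc]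
    have hzval : MvPolynomial.coeff d g = ((z d hd : ℤ):ℚ) / (D:ℚ) := by
      rw [← hz1 d hd]
      field_simp
    rw [hzval, hww]
    push_cast
    field_simp
  choose w hw1 hw2 using hw
  refine ⟨c, hc0, ?_, ?_⟩
  · intro d
    by_cases hd : d ∈ g.support
    · rw [hw1 d hd]
      simp only [Rat.den_intCast, Nat.dvd_one]
      exact hr.out.ne_one
    · have : MvPolynomial.coeff d (MvPolynomial.C c * g) = 0 := by
        rw [MvPolynomial.coeff_C_mul]
        have : MvPolynomial.coeff d g = 0 := by
          simpa [MvPolynomial.mem_support_iff] using hd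
        rw [this, mul_zero]
      rw [this]
      simp only [Rat.den_ofNat, Nat.dvd_one]
      exact hr.out.ne_one
  · -- nonvanishing at d0
    intro hpi0
    set d0 := d0att.1 with hd0def
    have hd0s : d0 ∈ g.support := d0att.2
    have hcoe : MvPolynomial.coeff d0 (piP r (MvPolynomial.C c * g))
        = redQ r ((w d0 hd0s : ℤ) : ℚ) := by
      rw [coeff_piP, hw1 d0 hd0s]
    have hne : redQ r ((w d0 hd0s : ℤ) : ℚ) ≠ 0 := by
      rw [redQ_intCast]
      intro h0
      have hdvd : (r:ℤ) ∣ w d0 hd0s := by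
        rwa [ZMod.intCast_zmod_eq_zero_iff_dvd] at h0
      -- then r^(m0+1) divides z d0, contradicting the minimality of the factorization
      have hzdvd : (r:ℤ)^(m0+1) ∣ z d0 hd0s := by
        obtain ⟨u, hu⟩ := hdvd
        refine ⟨u, ?_⟩
        rw [← hw2 d0 hd0s, hu]
        ring
      have hnatdvd : (r:ℕ)^(m0+1) ∣ (z d0 hd0s).natAbs := by
        apply Int.natCast_dvd.mp
        exact_mod_cast hzdvd
      have hle := (Nat.Prime.pow_dvd_iff_le_factorization hr.out
        (hz2 d0 hd0s ∘ Int.natAbs_eq_zero.mp)).mp hnatdvd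
      have heq : ((z d0 hd0s).natAbs.factorization) r = m0 := hd0
      omega
    rw [hpi0] at hcoe
    simp only [MvPolynomial.coeff_zero] at hcoe
    exact hne hcoe.symm
end Scale

/-! ### lemma B and M-set comparison -/

section BM
open scoped MonomialOrder
variable {n : ℕ} (r : ℕ) [hr : Fact r.Prime]
variable (m m' : MonomialOrder (Fin n))
variable (I : Ideal (MvPolynomial (Fin n) ℚ)) (G : Finset (MvPolynomial (Fin n) ℚ))

omit hr in
lemma support_C_mul {K : Type*} [Field K] {c : K} (hc : c ≠ 0) (g : MvPolynomial (Fin n) K) :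
    (MvPolynomial.C c * g).support = g.support := by
  ext d
  simp only [MvPolynomial.mem_support_iff, MvPolynomial.coeff_C_mul]
  constructor
  · intro h h0; exact h (by rw [h0, mul_zero])
  · intro h h0
    rcases mul_eq_zero.mp h0 with h1 | h1
    · exact hc h1
    · exact h h1

/-- Lemma B: for any nonzero `g ∈ I` there is a nonzero element of the reduction ideal
whose `m'`-leading exponent lies in the support of `g`. -/
lemma lemB (hGI : (G : Set (MvPolynomial (Fin n) ℚ)) ⊆ I)
    (hGB : ∀ f ∈ I, f ≠ 0 → ∃ g ∈ G, lexp m g ≤ lexp m f)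
    (hGl : ∀ g ∈ G, lcoeff m g = 1)
    (hden : ¬ r ∣ denF G)
    {g : MvPolynomial (Fin n) ℚ} (hgI : g ∈ I) (hg0 : g ≠ 0) :
    ∃ h ∈ Ideal.span (piP r '' (G : Set (MvPolynomial (Fin n) ℚ))),
      h ≠ 0 ∧ lexp m' h ∈ g.support := by
  obtain ⟨c, hc0, hcint, hcne⟩ := scale_primitive r hg0
  obtain ⟨F, hF⟩ := exists_lift r _ hcint
  have hfI : MvPolynomial.C c * g ∈ I := Ideal.mul_mem_left _ _ hgI
  have hmem := main1 r m I G hGI hGB hGl hden F (by rw [hF]; exact hfI)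
  have heq : piP r (MvPolynomial.C c * g) = MvPolynomial.map (phi r) F := by
    rw [← hF, piP_map]
  refine ⟨piP r (MvPolynomial.C c * g), by rw [heq]; exact hmem, hcne, ?_⟩
  have h1 : lexp m' (piP r (MvPolynomial.C c * g)) ∈ (piP r (MvPolynomial.C c * g)).support :=
    lexp_mem_support m' hcne
  have h2 := piP_support_subset r (MvPolynomial.C c * g) h1
  rwa [support_C_mul hc0] at h2

/-- under the assumption that `r` is both σ-good and τ-good, the τ-M-set of the reduction
ideal coincides with that of `I`. -/
lemma MSet_eq (hGI : (G : Set (MvPolynomial (Fin n) ℚ)) ⊆ I)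
    (hGB : ∀ f ∈ I, f ≠ 0 → ∃ g ∈ G, lexp m g ≤ lexp m f)
    (hGl : ∀ g ∈ G, lcoeff m g = 1)
    (hden : ¬ r ∣ denF G)
    (G' : Finset (MvPolynomial (Fin n) ℚ)) (hG'0 : (0 : MvPolynomial (Fin n) ℚ) ∉ G')
    (hG'I : (G' : Set (MvPolynomial (Fin n) ℚ)) ⊆ I)
    (hG'B : ∀ f ∈ I, f ≠ 0 → ∃ g ∈ G', lexp m' g ≤ lexp m' f)
    (hG'l : ∀ g ∈ G', lcoeff m' g = 1)
    (hden' : ¬ r ∣ denF G') :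
    MSet m' (Ideal.span (piP r '' (G : Set (MvPolynomial (Fin n) ℚ)))) = MSet m' I := by
  ext e
  constructor
  · rintro ⟨h, hh, hne, rfl⟩
    obtain ⟨g, hgG', hle⟩ := red_GB r m' I G' hG'I hG'B hG'l hden' G hGI hden h hh hne
    have hg0 : g ≠ 0 := fun h0 => hG'0 (h0 ▸ hgG')
    obtain ⟨hne2, hlexp⟩ := lexp_monomial_one_mul m' hg0 (lexp m' h - lexp m' g)
    refine ⟨_, Ideal.mul_mem_left _ _ (hG'I hgG'), hne2, ?_⟩
    rw [hlexp, tsub_add_cancel_of_le hle]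
  · rintro ⟨f, hf, hne, rfl⟩
    obtain ⟨g, hgG', hle⟩ := hG'B f hf hne
    have hg0 : g ≠ 0 := fun h0 => hG'0 (h0 ▸ hgG')
    obtain ⟨G2, hG2⟩ := exists_lift r g (coeff_den_not_dvd r hden' hgG')
    have hmem := main1 r m I G hGI hGB hGl hden G2 (by rw [hG2]; exact hG'I hgG')
    have heq : piP r g = MvPolynomial.map (phi r) G2 := by rw [← hG2, piP_map]
    obtain ⟨hpne, hplexp⟩ := piP_lexp_eq r m' hg0 (hG'l g hgG')
      (coeff_den_not_dvd r hden' hgG')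
    obtain ⟨hne2, hlexp⟩ := lexp_monomial_one_mul m' hpne (lexp m' f - lexp m' g)
    refine ⟨_, Ideal.mul_mem_left _ _ (by rw [heq]; exact hmem), hne2, ?_⟩
    rw [hlexp, hplexp, tsub_add_cancel_of_le hle]

/-- minimal generators are leading exponents of GB elements. -/
lemma minGen_to_G {K : Type*} [Field K] {m0 : MonomialOrder (Fin n)}
    {J : Ideal (MvPolynomial (Fin n) K)} {G0 : Finset (MvPolynomial (Fin n) K)}
    (hG0 : (G0 : Set (MvPolynomial (Fin n) K)) ⊆ J) (h00 : (0 : MvPolynomial (Fin n) K) ∉ G0)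
    (hGB : ∀ f ∈ J, f ≠ 0 → ∃ g ∈ G0, lexp m0 g ≤ lexp m0 f)
    {t : Fin n →₀ ℕ} (ht : t ∈ minGenSet m0 J) : ∃ g ∈ G0, lexp m0 g = t := by
  obtain ⟨⟨f, hf, hf0, hfd⟩, hmin⟩ := ht
  obtain ⟨g, hgG, hle⟩ := hGB f hf hf0
  have hg0 : g ≠ 0 := fun h0 => h00 (h0 ▸ hgG)
  exact ⟨g, hgG, hmin g (hG0 hgG) hg0 (hfd ▸ hle)⟩

end BM

end Stmt18Aux

/-- if `p, q` are σ-good for `I` and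
`O_τ(I_{(q,σ)}) ≺_τ O_τ(I_{(p,σ)})` then `q` is τ-bad for `I`. -/
theorem stmt18 {n : ℕ} (mσ mτ : MonomialOrder (Fin n))
    (I : Ideal (MvPolynomial (Fin n) ℚ)) (hI : I ≠ ⊥)
    (Gσ Gτ : Finset (MvPolynomial (Fin n) ℚ))
    (hGσ : GB.IsReducedGB mσ Gσ I) (hGτ : GB.IsReducedGB mτ Gτ I)
    (p q : ℕ) [Fact p.Prime] [Fact q.Prime]
    (hpσ : ¬ p ∣ GB.denF Gσ) (hqσ : ¬ q ∣ GB.denF Gσ)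
    (Lp Lq : List (Fin n →₀ ℕ))
    (hLp : GB.IsOsIdeal mτ
      (Ideal.span ((Gσ.image (GB.piP p) : Finset (MvPolynomial (Fin n) (ZMod p))) :
        Set (MvPolynomial (Fin n) (ZMod p)))) Lp)
    (hLq : GB.IsOsIdeal mτ
      (Ideal.span ((Gσ.image (GB.piP q) : Finset (MvPolynomial (Fin n) (ZMod q))) :
        Set (MvPolynomial (Fin n) (ZMod q)))) Lq)
    (hprec : GB.Prec mτ Lq Lp) :
    q ∣ GB.denF Gτ := by
  classical
  by_contra hqτ
  obtain ⟨⟨h0σ, hsubσ, hspanσ, hgbσ⟩, hlcσ, hredσ⟩ := hGσ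
  obtain ⟨⟨h0τ, hsubτ, hspanτ, hgbτ⟩, hlcτ, hredτ⟩ := hGτ
  rw [Finset.coe_image] at hLp hLq
  obtain ⟨hsortp, hmemp⟩ := hLp
  obtain ⟨hsortq, hmemq⟩ := hLq
  have hMeq := Stmt18Aux.MSet_eq q mσ mτ I Gσ hsubσ hgbσ hlcσ hqσ Gτ h0τ hsubτ hgbτ hlcτ hqτ
  have hmg : GB.minGenSet mτ (Ideal.span (GB.piP q '' (Gσ : Set (MvPolynomial (Fin n) ℚ))))
      = GB.minGenSet mτ I := Stmt18Aux.minGenSet_eq_of_MSet_eq mτ hMeq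
  have hmemq' : ∀ d, d ∈ Lq ↔ d ∈ GB.minGenSet mτ I := by
    intro d; rw [hmemq d, hmg]
  set Jp := Ideal.span (GB.piP p '' (Gσ : Set (MvPolynomial (Fin n) ℚ))) with hJp
  have hB : ∀ g ∈ Gτ, ∃ h ∈ Jp, h ≠ 0 ∧ GB.lexp mτ h ∈ g.support := fun g hg =>
    Stmt18Aux.lemB p mσ mτ I Gσ hsubσ hgbσ hlcσ hpσ (hsubτ hg) (fun h0 => h0τ (h0 ▸ hg))
  have hminDvd : ∀ h ∈ Jp, h ≠ 0 → ∃ d ∈ GB.minGenSet mτ Jp, d ≤ GB.lexp mτ h :=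
    fun h hh hne => Stmt18Aux.exists_minGen_dvd mτ ⟨h, hh, hne, rfl⟩
  have hGτof : ∀ t ∈ GB.minGenSet mτ I, ∃ g ∈ Gτ, GB.lexp mτ g = t := fun t ht =>
    Stmt18Aux.minGen_to_G hsubτ h0τ hgbτ ht
  -- the key construction
  have key : ∀ t ∈ GB.minGenSet mτ I, ∃ s : Fin n →₀ ℕ, ∃ d ∈ GB.minGenSet mτ Jp,
      mτ.toSyn s ≤ mτ.toSyn t ∧ d ≤ s ∧
      (∀ d' ∈ GB.minGenSet mτ I, d' ≠ t → ¬ d' ≤ s) := by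
    intro t ht
    obtain ⟨g, hgτ, hlg⟩ := hGτof t ht
    obtain ⟨h, hhJ, hh0, hsupp⟩ := hB g hgτ
    obtain ⟨d, hdmin, hdle⟩ := hminDvd h hhJ hh0
    refine ⟨GB.lexp mτ h, d, hdmin, ?_, hdle, ?_⟩
    · have := Stmt18Aux.le_toSyn_lexp mτ hsupp
      rwa [hlg] at this
    · intro d' hd' hne hle
      obtain ⟨g', hg'τ, hlg'⟩ := hGτof d' hd'
      have hgg' : g' ≠ g := fun h0 => hne (by rw [← hlg', h0, hlg])
      exact hredτ g hgτ _ hsupp g' hg'τ hgg' (hlg' ▸ hle)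
  have hnodq : Lq.Nodup := hsortq.imp (fun {a b} h heq => by
    subst heq; exact absurd h (lt_irrefl _))
  rcases hprec with ⟨⟨t', ht'⟩, hne⟩ | ⟨k, hk1, hk2, htake, hlt⟩
  · -- Lp is a proper prefix of Lq
    have ht'ne : t' ≠ [] := by
      rintro rfl
      exact hne (by simpa using ht')
    set t := t'.head ht'ne with htdef
    have htLq : t ∈ Lq := by
      rw [← ht']; exact List.mem_append_right _ (List.head_mem _)
    have htI : t ∈ GB.minGenSet mτ I := (hmemq' t).mp htLq
    obtain ⟨s, d, hdmin, hst, hds, hnd⟩ := key t htI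
    have hdLp : d ∈ Lp := (hmemp d).mpr hdmin
    have hdLq : d ∈ Lq := by rw [← ht']; exact List.mem_append_left _ hdLp
    have hdI : d ∈ GB.minGenSet mτ I := (hmemq' d).mp hdLq
    have hdt : d ≠ t := by
      intro h0
      have hnodq2 := hnodq
      rw [← ht', List.nodup_append] at hnodq2
      exact hnodq2.2.2 d hdLp t (List.head_mem _) h0
    exact hnd d hdI hdt hds
  · -- first difference at index k
    have htq : Lq.getD k 0 = Lq[k]'hk2 := List.getD_eq_getElem Lq 0 hk2
    have htp : Lp.getD k 0 = Lp[k]'hk1 := List.getD_eq_getElem Lp 0 hk1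
    set t := Lq[k]'hk2 with htdef
    have htLq : t ∈ Lq := List.getElem_mem hk2
    have htI : t ∈ GB.minGenSet mτ I := (hmemq' t).mp htLq
    obtain ⟨s, d, hdmin, hst, hds, hnd⟩ := key t htI
    have hdLp : d ∈ Lp := (hmemp d).mpr hdmin
    obtain ⟨j, hj, hdj⟩ := List.getElem_of_mem hdLp
    by_cases hjk : j < k
    · -- d occurs in the common prefix
      have hdq : Lq[j]'(lt_trans hjk hk2) = d := by
        have e1 : (Lp.take k)[j]'(by simp [List.length_take]; omega) = Lp[j]'hj :=
          List.getElem_take ..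
        have e2 : (Lq.take k)[j]'(by simp [List.length_take]; omega) = Lq[j]'(lt_trans hjk hk2) :=
          List.getElem_take ..
        have e3 : (Lp.take k)[j]'(by simp [List.length_take]; omega)
            = (Lq.take k)[j]'(by simp [List.length_take]; omega) :=
          List.getElem_of_eq htake _
        rw [← e2, ← e3, e1, hdj]
      have hdLq : d ∈ Lq := by rw [← hdq]; exact List.getElem_mem _
      have hdI : d ∈ GB.minGenSet mτ I := (hmemq' d).mp hdLq
      have hdt : d ≠ t := by
        intro h0
        have : Lq[j]'(lt_trans hjk hk2) = Lq[k]'hk2 := by rw [hdq, h0]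
        have := (List.Nodup.getElem_inj_iff hnodq).mp this
        omega
      exact hnd d hdI hdt hds
    · -- d occurs at or after position k in Lp : contradiction with sortedness
      push_neg at hjk
      have h1 : mτ.toSyn (Lp[k]'hk1) ≤ mτ.toSyn (Lp[j]'hj) := by
        rcases eq_or_lt_of_le hjk with heq | hltkj
        · subst heq; exact le_refl _
        · exact le_of_lt (List.pairwise_iff_getElem.mp (show List.Pairwise (fun a b => mτ.toSyn a < mτ.toSyn b) Lp from hsortp) k j hk1 hj hltkj)
      have h2 : mτ.toSyn d ≤ mτ.toSyn s := mτ.toSyn_monotone hds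
      rw [htq, htp] at hlt
      rw [hdj] at h1
      have : mτ.toSyn (Lp[k]'hk1) < mτ.toSyn (Lp[k]'hk1) :=
        lt_of_le_of_lt (le_trans h1 (le_trans h2 hst)) hlt
      exact lt_irrefl _ this
end

section
/- Let σ be a term ordering on T^n, P = Q[x_1,...,x_n], f a nonzero polynomial in P, I an ideal with reduced σ-Gröbner basis G_σ, and δ a positive integer such that all coefficients of f and of every g ∈ G_σ with LT_σ(g) ≤_σ LT_σ(f) lie in the localization Z_δ. Then the normal form NF_{σ,I}(f) has all its coefficients in Z_δ. -/
open MvPolynomial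
open scoped Classical

namespace S19

variable {n : ℕ}

lemma toSyn_lexp (m : MonomialOrder (Fin n)) (f : MvPolynomial (Fin n) ℚ) :
    m.toSyn (GB.lexp m f) = f.support.sup fun d => m.toSyn d := by
  simp [GB.lexp]

lemma lexp_mem_support (m : MonomialOrder (Fin n)) (f : MvPolynomial (Fin n) ℚ)
    (hf : f ≠ 0) : GB.lexp m f ∈ f.support := by
  obtain ⟨d, hd, hEq⟩ := Finset.exists_mem_eq_sup f.support
    (MvPolynomial.support_nonempty.2 hf) (fun d => m.toSyn d)
  have : GB.lexp m f = d := by rw [GB.lexp, hEq]; exact m.toSyn.symm_apply_apply d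
  rwa [this]

lemma le_lexp (m : MonomialOrder (Fin n)) {f : MvPolynomial (Fin n) ℚ} {d : Fin n →₀ ℕ}
    (hd : d ∈ f.support) : m.toSyn d ≤ m.toSyn (GB.lexp m f) := by
  rw [toSyn_lexp]
  exact Finset.le_sup hd

lemma coeff_zero_of_lt (m : MonomialOrder (Fin n)) {f : MvPolynomial (Fin n) ℚ}
    {d : Fin n →₀ ℕ} (h : m.toSyn (GB.lexp m f) < m.toSyn d) :
    MvPolynomial.coeff d f = 0 := by
  by_contra hc
  exact absurd (le_lexp m (MvPolynomial.mem_support_iff.2 hc)) (not_le.2 h)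

def Pc (δ : ℕ) (f : MvPolynomial (Fin n) ℚ) : Prop :=
  ∀ (d : Fin n →₀ ℕ) (q : ℕ), q.Prime → q ∣ (MvPolynomial.coeff d f).den → q ∣ δ

lemma den_zero_prime {q : ℕ} (hq : q.Prime) (h : q ∣ (0 : ℚ).den) : False := by
  simp only [Rat.den_ofNat] at h
  exact Nat.Prime.one_lt hq |>.ne' (Nat.eq_one_of_dvd_one h)

lemma Pc_zero (δ : ℕ) : Pc (n := n) δ 0 := by
  intro d q hq hqd
  simp only [MvPolynomial.coeff_zero] at hqd
  exact absurd hqd (fun h => den_zero_prime hq h)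

lemma den_add {a b : ℚ} {q : ℕ} (hq : q.Prime) (h : q ∣ (a + b).den) :
    q ∣ a.den ∨ q ∣ b.den :=
  (Nat.Prime.dvd_mul hq).1 (h.trans (Rat.add_den_dvd a b))

lemma den_mul {a b : ℚ} {q : ℕ} (hq : q.Prime) (h : q ∣ (a * b).den) :
    q ∣ a.den ∨ q ∣ b.den :=
  (Nat.Prime.dvd_mul hq).1 (h.trans (Rat.mul_den_dvd a b))

lemma den_sub {a b : ℚ} {q : ℕ} (hq : q.Prime) (h : q ∣ (a - b).den) :
    q ∣ a.den ∨ q ∣ b.den := by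
  rw [sub_eq_add_neg] at h
  rcases den_add hq h with h1 | h1
  · exact Or.inl h1
  · right; rwa [Rat.neg_den] at h1

lemma prime_dvd_lcm {α : Type*} {s : Finset α} {g : α → ℕ} {q : ℕ} (hq : q.Prime)
    (h : q ∣ s.lcm g) : ∃ d ∈ s, q ∣ g d := by
  classical
  induction s using Finset.induction_on with
  | empty =>
    simp only [Finset.lcm_empty] at h
    exact absurd (Nat.eq_one_of_dvd_one h) hq.one_lt.ne'
  | insert _ _ ha ih =>
    rw [Finset.lcm_insert] at h
    have h2 : q ∣ _ * _ := h.trans (lcm_dvd (dvd_mul_right _ _) (dvd_mul_left _ _))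
    rcases (Nat.Prime.dvd_mul hq).1 h2 with h3 | h3
    · exact ⟨_, Finset.mem_insert_self _ _, h3⟩
    · obtain ⟨d, hd, hqd⟩ := ih h3
      exact ⟨d, Finset.mem_insert_of_mem hd, hqd⟩

lemma exists_nf (m : MonomialOrder (Fin n)) (I : Ideal (MvPolynomial (Fin n) ℚ))
    (G : Finset (MvPolynomial (Fin n) ℚ)) (hG : GB.IsReducedGB m G I) (δ : ℕ) :
    ∀ (s : m.syn) (f : MvPolynomial (Fin n) ℚ), m.toSyn (GB.lexp m f) = s →
      Pc δ f → (∀ g ∈ G, m.toSyn (GB.lexp m g) ≤ m.toSyn (GB.lexp m f) → Pc δ g) →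
      ∃ r', f - r' ∈ I ∧ (∀ d ∈ r'.support, ∀ h ∈ I, h ≠ 0 → ¬ GB.lexp m h ≤ d) ∧
        (∀ d ∈ r'.support, m.toSyn d ≤ m.toSyn (GB.lexp m f)) ∧ Pc δ r' := by
  intro s
  induction s using WellFoundedLT.induction with
  | ind s ih =>
  intro f hs hPf hPG
  by_cases hf0 : f = 0
  · exact ⟨0, by rw [sub_zero, hf0]; exact I.zero_mem, by simp, by simp, Pc_zero δ⟩
  by_cases hdiv : ∃ h ∈ I, h ≠ 0 ∧ GB.lexp m h ≤ GB.lexp m f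
  · -- top reduction by some g ∈ G
    obtain ⟨h, hI, h0, hle⟩ := hdiv
    obtain ⟨g, hgG, hgle⟩ := hG.1.2.2.2 h hI h0
    have hgf : GB.lexp m g ≤ GB.lexp m f := le_trans hgle hle
    have hgI : g ∈ I := hG.1.2.1 hgG
    have hg0 : g ≠ 0 := fun hgg => hG.1.1 (hgg ▸ hgG)
    set c : ℚ := GB.lcoeff m f with hc
    set e : Fin n →₀ ℕ := GB.lexp m f - GB.lexp m g with hedef
    have he : e + GB.lexp m g = GB.lexp m f := tsub_add_cancel_of_le hgf
    have hef : e ≤ GB.lexp m f := by rw [← he]; exact le_self_add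
    set p : MvPolynomial (Fin n) ℚ := monomial e c * g with hp
    have hpsup : ∀ d, m.toSyn (GB.lexp m f) < m.toSyn d → MvPolynomial.coeff d p = 0 := by
      intro d hd
      rw [hp, MvPolynomial.coeff_monomial_mul']
      split_ifs with hed
      · rcases eq_or_ne (MvPolynomial.coeff (d - e) g) 0 with hcg | hcg
        · rw [hcg, mul_zero]
        · exfalso
          have h1 : m.toSyn (d - e) ≤ m.toSyn (GB.lexp m g) :=
            le_lexp m (MvPolynomial.mem_support_iff.2 hcg)
          have h2 : e + (d - e) = d := add_tsub_cancel_of_le hed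
          have h3 : m.toSyn d ≤ m.toSyn (GB.lexp m f) := by
            rw [← h2, ← he, map_add, map_add]
            exact add_le_add_right h1 _
          exact absurd h3 (not_le.2 hd)
      · rfl
    have hpc : MvPolynomial.coeff (GB.lexp m f) p = c := by
      rw [hp, MvPolynomial.coeff_monomial_mul', if_pos hef]
      have h4 : GB.lexp m f - e = GB.lexp m g := by rw [← he]; simp
      rw [h4]
      have h5 : MvPolynomial.coeff (GB.lexp m g) g = 1 := hG.2.1 g hgG
      rw [h5, mul_one]
    have hPp : ∀ (d : Fin n →₀ ℕ) (q : ℕ), q.Prime →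
        q ∣ (MvPolynomial.coeff d p).den → q ∣ δ := by
      intro d q hq hqd
      rw [hp, MvPolynomial.coeff_monomial_mul'] at hqd
      split_ifs at hqd with hed
      · rcases den_mul hq hqd with h' | h'
        · exact hPf _ q hq h'
        · exact hPG g hgG (m.toSyn_monotone hgf) _ q hq h'
      · exact absurd hqd (fun hh => den_zero_prime hq hh)
    set f₁ : MvPolynomial (Fin n) ℚ := f - p with hf1def
    have hpI : p ∈ I := Ideal.mul_mem_left I _ hgI
    have hf1lt : ∀ d ∈ f₁.support, m.toSyn d < m.toSyn (GB.lexp m f) := by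
      intro d hd
      rw [MvPolynomial.mem_support_iff] at hd
      rcases lt_trichotomy (m.toSyn d) (m.toSyn (GB.lexp m f)) with hlt | heq | hgt
      · exact hlt
      · exfalso; apply hd
        have hde : d = GB.lexp m f := m.toSyn.injective heq
        rw [hf1def, MvPolynomial.coeff_sub, hde, hpc, hc, GB.lcoeff, sub_self]
      · exfalso; apply hd
        rw [hf1def, MvPolynomial.coeff_sub, hpsup d hgt, coeff_zero_of_lt m hgt, sub_zero]
    have hPf1 : Pc δ f₁ := by
      intro d q hq hqd
      rw [hf1def, MvPolynomial.coeff_sub] at hqd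
      rcases den_sub hq hqd with h' | h'
      · exact hPf d q hq h'
      · exact hPp d q hq h'
    by_cases hf10 : f₁ = 0
    · refine ⟨0, ?_, by simp, by simp, Pc_zero δ⟩
      rw [sub_zero]
      have : f = p := by rwa [hf1def, sub_eq_zero] at hf10
      rw [this]; exact hpI
    · have hlt1 : m.toSyn (GB.lexp m f₁) < s := by
        rw [← hs]
        exact hf1lt _ (lexp_mem_support m f₁ hf10)
      have hle1 : m.toSyn (GB.lexp m f₁) ≤ m.toSyn (GB.lexp m f) := by
        rw [hs]; exact le_of_lt hlt1
      obtain ⟨r₁, hr₁I, hr₁sup, hr₁le, hr₁P⟩ := ih _ hlt1 f₁ rfl hPf1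
        (fun g' hg' hle' => hPG g' hg' (le_trans hle' hle1))
      refine ⟨r₁, ?_, hr₁sup, fun d hd => le_trans (hr₁le d hd) hle1, hr₁P⟩
      have : f - r₁ = (f₁ - r₁) + p := by rw [hf1def]; ring
      rw [this]; exact I.add_mem hr₁I hpI
  · -- leading term of f is not reducible: strip it off
    push_neg at hdiv
    set c : ℚ := GB.lcoeff m f with hc
    set a : Fin n →₀ ℕ := GB.lexp m f with ha
    set p : MvPolynomial (Fin n) ℚ := monomial a c with hp
    have hpcoeff : ∀ d, MvPolynomial.coeff d p = if a = d then c else 0 := by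
      intro d; rw [hp, MvPolynomial.coeff_monomial]
    have hPp : ∀ (d : Fin n →₀ ℕ) (q : ℕ), q.Prime →
        q ∣ (MvPolynomial.coeff d p).den → q ∣ δ := by
      intro d q hq hqd
      rw [hpcoeff] at hqd
      split_ifs at hqd with had
      · exact hPf _ q hq hqd
      · exact absurd hqd (fun hh => den_zero_prime hq hh)
    have hpsupp : ∀ d ∈ p.support, d = a := by
      intro d hd
      rw [MvPolynomial.mem_support_iff, hpcoeff] at hd
      split_ifs at hd with had
      · exact had.symm
      · exact absurd rfl hd
    set f₁ : MvPolynomial (Fin n) ℚ := f - p with hf1def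
    have hf1lt : ∀ d ∈ f₁.support, m.toSyn d < m.toSyn (GB.lexp m f) := by
      intro d hd
      rw [MvPolynomial.mem_support_iff] at hd
      rcases lt_trichotomy (m.toSyn d) (m.toSyn (GB.lexp m f)) with hlt | heq | hgt
      · exact hlt
      · exfalso; apply hd
        have hde : d = GB.lexp m f := m.toSyn.injective heq
        rw [hf1def, MvPolynomial.coeff_sub, hde, hpcoeff, if_pos rfl, hc, GB.lcoeff, sub_self]
      · exfalso; apply hd
        have hda : a ≠ d := by
          intro hh
          rw [← hh] at hgt
          exact absurd hgt (lt_irrefl _)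
        rw [hf1def, MvPolynomial.coeff_sub, hpcoeff, if_neg hda,
          coeff_zero_of_lt m hgt, sub_zero]
    have hPf1 : Pc δ f₁ := by
      intro d q hq hqd
      rw [hf1def, MvPolynomial.coeff_sub] at hqd
      rcases den_sub hq hqd with h' | h'
      · exact hPf d q hq h'
      · exact hPp d q hq h'
    by_cases hf10 : f₁ = 0
    · refine ⟨p, ?_, ?_, ?_, hPp⟩
      · rw [← hf1def, hf10]; exact I.zero_mem
      · intro d hd h hI h0
        rw [hpsupp d hd]
        exact hdiv h hI h0
      · intro d hd
        rw [hpsupp d hd, ha]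
    · have hlt1 : m.toSyn (GB.lexp m f₁) < s := by
        rw [← hs]
        exact hf1lt _ (lexp_mem_support m f₁ hf10)
      have hle1 : m.toSyn (GB.lexp m f₁) ≤ m.toSyn (GB.lexp m f) := by
        rw [hs]; exact le_of_lt hlt1
      obtain ⟨r₁, hr₁I, hr₁sup, hr₁le, hr₁P⟩ := ih _ hlt1 f₁ rfl hPf1
        (fun g' hg' hle' => hPG g' hg' (le_trans hle' hle1))
      refine ⟨p + r₁, ?_, ?_, ?_, ?_⟩
      · have : f - (p + r₁) = f₁ - r₁ := by rw [hf1def]; ring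
        rw [this]; exact hr₁I
      · intro d hd h hI h0
        rcases Finset.mem_union.1 (MvPolynomial.support_add hd) with hd' | hd'
        · rw [hpsupp d hd']; exact hdiv h hI h0
        · exact hr₁sup d hd' h hI h0
      · intro d hd
        rcases Finset.mem_union.1 (MvPolynomial.support_add hd) with hd' | hd'
        · rw [hpsupp d hd', ha]
        · exact le_trans (hr₁le d hd') hle1
      · intro d q hq hqd
        rw [MvPolynomial.coeff_add] at hqd
        rcases den_add hq hqd with h' | h'
        · exact hPp d q hq h'
        · exact hr₁P d q hq h'

end S19


/-- the normal form of `f` w.r.t. the reduced σ-Gröbner basis has all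
its coefficients in `ℤ_δ`, provided the coefficients of `f` and of every `g ∈ G_σ`
with `LT_σ(g) ≤_σ LT_σ(f)` lie in `ℤ_δ`. -/
theorem stmt19 {n : ℕ} (m : MonomialOrder (Fin n))
    (f : MvPolynomial (Fin n) ℚ) (hf : f ≠ 0)
    (I : Ideal (MvPolynomial (Fin n) ℚ)) (G : Finset (MvPolynomial (Fin n) ℚ))
    (hG : GB.IsReducedGB m G I)
    (δ : ℕ) (hδ : 0 < δ)
    (hfδ : ∀ q : ℕ, q.Prime → q ∣ GB.den f → q ∣ δ)
    (hGδ : ∀ g ∈ G, m.toSyn (GB.lexp m g) ≤ m.toSyn (GB.lexp m f) →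
      ∀ q : ℕ, q.Prime → q ∣ GB.den g → q ∣ δ)
    (r : MvPolynomial (Fin n) ℚ)
    (hr1 : f - r ∈ I)
    (hr2 : ∀ d ∈ r.support, ∀ g ∈ I, g ≠ 0 → ¬ GB.lexp m g ≤ d) :
    ∀ q : ℕ, q.Prime → q ∣ GB.den r → q ∣ δ := by
  classical
  have toPc : ∀ (h : MvPolynomial (Fin n) ℚ), (∀ q : ℕ, q.Prime → q ∣ GB.den h → q ∣ δ) →
      S19.Pc δ h := by
    intro h hh d q hq hqd
    by_cases hd : d ∈ h.support
    · exact hh q hq (hqd.trans (Finset.dvd_lcm hd))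
    · rw [MvPolynomial.notMem_support_iff] at hd
      rw [hd] at hqd
      exact absurd hqd (fun x => S19.den_zero_prime hq x)
  obtain ⟨r', hI', hsup', hle', hP'⟩ := S19.exists_nf m I G hG δ _ f rfl (toPc f hfδ)
    (fun g hg hle => toPc g (hGδ g hg hle))
  have hrr : r = r' := by
    by_contra hne
    have hu0 : r - r' ≠ 0 := sub_ne_zero.2 hne
    have huI : r - r' ∈ I := by
      have heq : r - r' = (f - r') - (f - r) := by ring
      rw [heq]; exact I.sub_mem hI' hr1
    obtain ⟨g, hgG, hgle⟩ := hG.1.2.2.2 _ huI hu0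
    have hgI : g ∈ I := hG.1.2.1 hgG
    have hg0 : g ≠ 0 := fun hgg => hG.1.1 (hgg ▸ hgG)
    have hmem := S19.lexp_mem_support m _ hu0
    rcases Finset.mem_union.1 (MvPolynomial.support_sub _ r r' hmem) with hh | hh
    · exact hr2 _ hh g hgI hg0 hgle
    · exact hsup' _ hh g hgI hg0 hgle
  intro q hq hqd
  obtain ⟨d, hd, hqd'⟩ := S19.prime_dvd_lcm hq hqd
  rw [hrr] at hqd'
  exact hP' d q hq hqd'
end
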